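/- arXiv:2308.15184 — 8 statements merged into one kernel-verified Lean document; each statement's English description precedes it below -/
import Mathlib

section
/- For every LTLf formula φ over a finite set P of atomic propositions, the language L(φ) of nonempty finite traces over the alphabet Set P that satisfy φ is regular: there exists a DFA over the alphabet Set P with a finite state type that accepts exactly the nonempty finite traces π with π ⊨ φ. -/
/-- Syntax of LTLf formulas over atomic propositions `P`:
`φ ::= p | ¬φ | φ ∧ φ | ◯φ | φ U φ`. -/
inductive LTLf (P : Type) : Type where
  | atom : P → LTLf P
  | not  : LTLf P → LTLf P
  | and  : LTLf P → LTLf P → LTLf P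
  | next : LTLf P → LTLf P
  | untl : LTLf P → LTLf P → LTLf P

/-- `LTLf.SatAt π φ i` : the finite trace `π` satisfies `φ` at position `i`. -/
def LTLf.SatAt {P : Type} (π : List (Set P)) : LTLf P → ℕ → Prop
  | .atom p, i => p ∈ π.getD i ∅
  | .not φ, i => ¬ LTLf.SatAt π φ i
  | .and φ ψ, i => LTLf.SatAt π φ i ∧ LTLf.SatAt π ψ i
  | .next φ, i => i + 1 < π.length ∧ LTLf.SatAt π φ (i + 1)
  | .untl φ ψ, i =>
      ∃ j, i ≤ j ∧ j < π.length ∧ LTLf.SatAt π ψ j ∧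
        ∀ k, i ≤ k → k < j → LTLf.SatAt π φ k

/-- `π ⊨ φ` : the finite trace `π` satisfies `φ` (at position `0`). -/
def LTLf.Sat {P : Type} (π : List (Set P)) (φ : LTLf P) : Prop :=
  LTLf.SatAt π φ 0

deriving instance DecidableEq for LTLf

namespace LTLfRegular

open Classical in
noncomputable scoped instance (priority := low) : ∀ (p : Prop), Decidable p :=
  fun p => Classical.propDecidable p

variable {P : Type}

/-- Subformulas (including the formula itself). -/
def sub : LTLf P → List (LTLf P)
  | .atom p => [.atom p]
  | .not ψ => .not ψ :: sub ψ
  | .and ψ χ => .and ψ χ :: (sub ψ ++ sub χ)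
  | .next ψ => .next ψ :: sub ψ
  | .untl ψ χ => .untl ψ χ :: (sub ψ ++ sub χ)

lemma self_mem_sub (ψ : LTLf P) : ψ ∈ sub ψ := by
  cases ψ <;> simp [sub]

lemma sub_trans : ∀ φ ψ : LTLf P, ψ ∈ sub φ → sub ψ ⊆ sub φ := by
  intro φ
  induction φ with
  | atom p =>
      intro ψ h
      simp [sub] at h
      subst h; simp [sub]
  | not φ ih =>
      intro ψ h
      rcases (by simpa [sub] using h : ψ = .not φ ∨ ψ ∈ sub φ) with h | h
      · subst h; exact fun _ hx => hx
      · intro x hx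
        have := ih ψ h hx
        simp [sub]; tauto
  | and φ₁ φ₂ ih1 ih2 =>
      intro ψ h
      rcases (by simpa [sub] using h : ψ = .and φ₁ φ₂ ∨ ψ ∈ sub φ₁ ∨ ψ ∈ sub φ₂) with h | h | h
      · subst h; exact fun _ hx => hx
      · intro x hx; have := ih1 ψ h hx; simp [sub]; tauto
      · intro x hx; have := ih2 ψ h hx; simp [sub]; tauto
  | next φ ih =>
      intro ψ h
      rcases (by simpa [sub] using h : ψ = .next φ ∨ ψ ∈ sub φ) with h | h
      · subst h; exact fun _ hx => hx
      · intro x hx; have := ih ψ h hx; simp [sub]; tauto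
  | untl φ₁ φ₂ ih1 ih2 =>
      intro ψ h
      rcases (by simpa [sub] using h : ψ = .untl φ₁ φ₂ ∨ ψ ∈ sub φ₁ ∨ ψ ∈ sub φ₂) with h | h | h
      · subst h; exact fun _ hx => hx
      · intro x hx; have := ih1 ψ h hx; simp [sub]; tauto
      · intro x hx; have := ih2 ψ h hx; simp [sub]; tauto

/-- One-step update of the truth values when a letter is prepended. -/
def updF (a : Set P) (ne : Prop) (v : LTLf P → Prop) : LTLf P → Prop
  | .atom p => p ∈ a
  | .not ψ => ¬ updF a ne v ψ
  | .and ψ χ => updF a ne v ψ ∧ updF a ne v χ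
  | .next ψ => ne ∧ v ψ
  | .untl ψ χ => updF a ne v χ ∨ (updF a ne v ψ ∧ v (.untl ψ χ))

lemma satAt_cons_succ (a : Set P) (σ : List (Set P)) (ψ : LTLf P) :
    ∀ i, LTLf.SatAt (a :: σ) ψ (i + 1) ↔ LTLf.SatAt σ ψ i := by
  induction ψ with
  | atom p => intro i; simp [LTLf.SatAt]
  | not ψ ih => intro i; simp [LTLf.SatAt, ih]
  | and ψ χ ih1 ih2 => intro i; simp [LTLf.SatAt, ih1, ih2]
  | next ψ ih =>
      intro i
      simp only [LTLf.SatAt, List.length_cons, ih]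
      exact and_congr (by omega) Iff.rfl
  | untl ψ χ ih1 ih2 =>
      intro i
      constructor
      · rintro ⟨j, hij, hjl, hχ, hk⟩
        obtain ⟨j', rfl⟩ : ∃ j', j = j' + 1 := ⟨j - 1, by omega⟩
        refine ⟨j', by omega, by simpa using hjl, (ih2 _).mp hχ, ?_⟩
        intro k hk1 hk2
        exact (ih1 _).mp (hk (k + 1) (by omega) (by omega))
      · rintro ⟨j, hij, hjl, hχ, hk⟩
        refine ⟨j + 1, by omega, by simp; omega, (ih2 _).mpr hχ, ?_⟩
        intro k hk1 hk2
        obtain ⟨k', rfl⟩ : ∃ k', k = k' + 1 := ⟨k - 1, by omega⟩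
        exact (ih1 _).mpr (hk k' (by omega) (by omega))

lemma updF_correct (a : Set P) (σ : List (Set P)) (v : LTLf P → Prop) :
    ∀ ψ : LTLf P, (∀ χ ∈ sub ψ, (v χ ↔ LTLf.SatAt σ χ 0)) →
      (updF a (σ ≠ []) v ψ ↔ LTLf.SatAt (a :: σ) ψ 0) := by
  intro ψ
  induction ψ with
  | atom p => intro _; simp [updF, LTLf.SatAt]
  | not ψ ih =>
      intro hv
      have := ih (fun χ h => hv χ (by simp [sub]; tauto))
      simp [updF, LTLf.SatAt, this]
  | and ψ χ ih1 ih2 =>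
      intro hv
      have h1 := ih1 (fun χ' h => hv χ' (by simp [sub]; tauto))
      have h2 := ih2 (fun χ' h => hv χ' (by simp [sub]; tauto))
      simp [updF, LTLf.SatAt, h1, h2]
  | next ψ ih =>
      intro hv
      have hvψ := hv ψ (by simp [sub, self_mem_sub])
      show (σ ≠ [] ∧ v ψ) ↔ (0 + 1 < (a :: σ).length ∧ LTLf.SatAt (a :: σ) ψ (0 + 1))
      rw [satAt_cons_succ, hvψ]
      refine and_congr ?_ Iff.rfl
      simp only [List.length_cons]
      constructor
      · intro h; have := List.length_pos_iff.mpr h; omega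
      · intro h; exact List.length_pos_iff.mp (by omega)
  | untl ψ χ ih1 ih2 =>
      intro hv
      have h1 := ih1 (fun χ' h => hv χ' (by simp [sub]; tauto))
      have h2 := ih2 (fun χ' h => hv χ' (by simp [sub]; tauto))
      have hvu := hv (.untl ψ χ) (self_mem_sub _)
      show (updF a (σ ≠ []) v χ ∨ (updF a (σ ≠ []) v ψ ∧ v (.untl ψ χ))) ↔ _
      rw [h1, h2, hvu]
      constructor
      · rintro (hχ | ⟨hψ, j, hj0, hjl, hχ, hk⟩)
        · exact ⟨0, le_refl _, by simp, hχ, fun k h1 h2 => absurd h2 (by omega)⟩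
        · refine ⟨j + 1, by omega, by simp; omega, (satAt_cons_succ a σ χ j).mpr hχ, ?_⟩
          intro k _ hk2
          match k with
          | 0 => exact hψ
          | k' + 1 => exact (satAt_cons_succ a σ ψ k').mpr (hk k' (by omega) (by omega))
      · rintro ⟨j, hj0, hjl, hχ, hk⟩
        match j with
        | 0 => exact Or.inl hχ
        | j' + 1 =>
          refine Or.inr ⟨hk 0 (by omega) (by omega), j', by omega, by simpa using hjl,
            (satAt_cons_succ a σ χ j').mp hχ, ?_⟩
          intro k hk1 hk2
          exact (satAt_cons_succ a σ ψ k).mp (hk (k + 1) (by omega) (by omega))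

variable (φ : LTLf P)

/-- Profiles: whether the trace is nonempty, plus truth values of the subformulas. -/
abbrev Profile (φ : LTLf P) : Type := Prop × ({ψ : LTLf P // ψ ∈ sub φ} → Prop)

/-- The true profile of a trace. -/
def trueProfile (σ : List (Set P)) : Profile φ :=
  (σ ≠ [], fun ψ => LTLf.SatAt σ ψ.1 0)

/-- Extend a profile valuation to all formulas. -/
def ext (v : {ψ : LTLf P // ψ ∈ sub φ} → Prop) (χ : LTLf P) : Prop :=
  if h : χ ∈ sub φ then v ⟨χ, h⟩ else False

/-- Update a profile by prepending a letter. -/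
def updProfile (a : Set P) (pr : Profile φ) : Profile φ :=
  (True, fun ψ => updF a pr.1 (ext φ pr.2) ψ.1)

lemma updProfile_trueProfile (a : Set P) (σ : List (Set P)) :
    updProfile φ a (trueProfile φ σ) = trueProfile φ (a :: σ) := by
  unfold updProfile trueProfile
  refine Prod.ext ?_ ?_
  · simp
  · funext ψ
    refine propext ?_
    exact updF_correct a σ _ ψ.1 (fun χ hχ => by
      simp only [ext, dif_pos (sub_trans φ ψ.1 ψ.2 hχ)])

noncomputable def M : DFA (Set P) (Profile φ → Profile φ) where
  step := fun s a => fun pr => s (updProfile φ a pr)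
  start := id
  accept := {s | ((s (trueProfile φ [])).1 ∧ (s (trueProfile φ [])).2 ⟨φ, self_mem_sub φ⟩)}

lemma evalFrom_eq (w : List (Set P)) :
    ∀ (s : Profile φ → Profile φ) (σ : List (Set P)),
      ((M φ).evalFrom s w) (trueProfile φ σ) = s (trueProfile φ (w ++ σ)) := by
  induction w with
  | nil => intro s σ; rfl
  | cons a w ih =>
      intro s σ
      show ((M φ).evalFrom ((M φ).step s a) w) (trueProfile φ σ) = _
      rw [ih]
      show s (updProfile φ a (trueProfile φ (w ++ σ))) = _
      rw [updProfile_trueProfile]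
      rfl

end LTLfRegular

/-- The language of every LTLf formula is regular: there is a DFA over the
alphabet `Set P`, with a finite state type, accepting exactly the nonempty
finite traces that satisfy `φ`. -/
theorem ltlf_language_regular {P : Type} [Fintype P] (φ : LTLf P) :
    ∃ (Q : Type) (_ : Fintype Q) (M : DFA (Set P) Q),
      ∀ π : List (Set P), π ∈ M.accepts ↔ (π ≠ [] ∧ LTLf.Sat π φ) := by
  classical
  refine ⟨LTLfRegular.Profile φ → LTLfRegular.Profile φ, inferInstance, LTLfRegular.M φ, ?_⟩
  intro π
  rw [DFA.mem_accepts]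
  have h := LTLfRegular.evalFrom_eq φ π ((LTLfRegular.M φ).start) []
  show ((LTLfRegular.M φ).eval π (LTLfRegular.trueProfile φ [])).1 ∧ _ ↔ _
  rw [show (LTLfRegular.M φ).eval π = (LTLfRegular.M φ).evalFrom (LTLfRegular.M φ).start π from rfl,
    h]
  simp [LTLfRegular.M, LTLfRegular.trueProfile, LTLf.Sat]
end

section
/- Determinacy of reachability/safety games (agent reachability): for every set T of nonempty finite words over A × B, exactly one of the following holds: (i) there exists an agent strategy enforcing Reach T; (ii) there exists an environment strategy enforcing Safe T', where T' is the set of nonempty finite words over A × B that are not in T. (Note that Safe T' is exactly the complement of Reach T in the space of infinite plays.) -/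
/-- The first `k` letters of an infinite trace. -/
def pre {α : Type} (π : ℕ → α) (k : ℕ) : List α := (List.range k).map π

/-- The finite history of pairs of moves after `k` rounds. -/
def playPrefix {A B : Type} (σag : List B → A) (σenv : List A → B) : ℕ → List (A × B)
  | 0 => []
  | k + 1 =>
      let h := playPrefix σag σenv k
      let a := σag (h.map Prod.snd)
      let b := σenv (h.map Prod.fst ++ [a])
      h ++ [(a, b)]

/-- The infinite play generated by an agent strategy `σag : List B → A`
(the agent moves first) and an environment strategy `σenv : List A → B`:
`a₀ = σag []`, `b₀ = σenv [a₀]`, `a_{i+1} = σag [b₀, …, b_i]`,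
`b_{i+1} = σenv [a₀, …, a_{i+1}]`, and `play σag σenv i = (a_i, b_i)`. -/
def play {A B : Type} (σag : List B → A) (σenv : List A → B) (i : ℕ) : A × B :=
  let h := playPrefix σag σenv i
  let a := σag (h.map Prod.snd)
  let b := σenv (h.map Prod.fst ++ [a])
  (a, b)

/-- Reachability property: some nonempty finite prefix is in `T`. -/
def Reach {A B : Type} (T : Set (List (A × B))) : Set (ℕ → A × B) :=
  {π | ∃ k, 1 ≤ k ∧ pre π k ∈ T}

/-- Safety property: every nonempty finite prefix is in `T`. -/
def Safe {A B : Type} (T : Set (List (A × B))) : Set (ℕ → A × B) :=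
  {π | ∀ k, 1 ≤ k → pre π k ∈ T}

/-- The agent strategy `σag` enforces the property `P`. -/
def AgentEnforces {A B : Type} (σag : List B → A) (P : Set (ℕ → A × B)) : Prop :=
  ∀ σenv : List A → B, play σag σenv ∈ P

/-- The environment strategy `σenv` enforces the property `P`. -/
def EnvEnforces {A B : Type} (σenv : List A → B) (P : Set (ℕ → A × B)) : Prop :=
  ∀ σag : List B → A, play σag σenv ∈ P

/-- The agent strategy `σag` enforces `Task` under the environment
specification `Env`. -/
def EnforcesUnder {A B : Type} (σag : List B → A) (Task Env : Set (ℕ → A × B)) : Prop :=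
  ∀ σenv : List A → B, EnvEnforces σenv Env → play σag σenv ∈ Task

/-! ### Auxiliary development for determinacy -/

namespace ReachDet

variable {A B : Type}

/-- `WinN T n h`: from the history `h`, the agent can force that within `n`
extra rounds some nonempty prefix lands in `T` (including `h` itself). -/
def WinN (T : Set (List (A × B))) : ℕ → List (A × B) → Prop
  | 0, h => h ≠ [] ∧ h ∈ T
  | n + 1, h => WinN T n h ∨ ∃ a, ∀ b, WinN T n (h ++ [(a, b)])

def Win (T : Set (List (A × B))) (h : List (A × B)) : Prop := ∃ n, WinN T n h

lemma winN_mono {T : Set (List (A × B))} {n m : ℕ} (hnm : n ≤ m) {h : List (A × B)}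
    (hw : WinN T n h) : WinN T m h := by
  induction hnm with
  | refl => exact hw
  | step _ ih => exact Or.inl ih

lemma notWin_step [Fintype B] {T : Set (List (A × B))} {h : List (A × B)}
    (hn : ¬ Win T h) : ∀ a : A, ∃ b : B, ¬ Win T (h ++ [(a, b)]) := by
  intro a
  by_contra hc
  push_neg at hc
  choose f hf using hc
  refine hn ⟨(Finset.univ.sup f) + 1, Or.inr ⟨a, fun b => ?_⟩⟩
  exact winN_mono (Finset.le_sup (Finset.mem_univ b)) (hf b)

/-- Minimal `n` with `WinN T n h`. -/
noncomputable def rank (T : Set (List (A × B))) (h : List (A × B)) : ℕ :=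
  sInf {n | WinN T n h}

lemma winN_rank {T : Set (List (A × B))} {h : List (A × B)} (hw : Win T h) :
    WinN T (rank T h) h :=
  Nat.sInf_mem hw

open Classical in
/-- The agent's move at history `h`. -/
noncomputable def agMoveAt [Nonempty A] (T : Set (List (A × B))) (h : List (A × B)) : A :=
  if hw : ∃ a : A, ∀ b : B, WinN T (rank T h - 1) (h ++ [(a, b)]) then hw.choose
  else Classical.arbitrary A

lemma agent_step [Nonempty A] {T : Set (List (A × B))} {h : List (A × B)}
    (hw : Win T h) (hmem : ¬ (h ≠ [] ∧ h ∈ T)) :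
    1 ≤ rank T h ∧ ∀ b : B, WinN T (rank T h - 1) (h ++ [(agMoveAt T h, b)]) := by
  have h0 : WinN T (rank T h) h := winN_rank hw
  have hr : rank T h ≠ 0 := by
    intro e
    rw [e] at h0
    exact hmem h0
  obtain ⟨m, hm⟩ := Nat.exists_eq_succ_of_ne_zero hr
  have hmlt : m < rank T h := by omega
  rw [hm] at h0
  rcases h0 with h1 | h2
  · exact absurd h1 (Nat.notMem_of_lt_sInf hmlt)
  · have hm' : m = rank T h - 1 := by omega
    rw [hm'] at h2
    refine ⟨by omega, ?_⟩
    rw [agMoveAt, dif_pos h2]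
    exact h2.choose_spec

/-- Reconstruction of the history from the (reversed) list of environment moves,
assuming the agent plays `agMoveAt`. -/
noncomputable def agHist [Nonempty A] (T : Set (List (A × B))) : List B → List (A × B)
  | [] => []
  | b :: r => agHist T r ++ [(agMoveAt T (agHist T r), b)]

/-- The agent's attractor strategy. -/
noncomputable def agStrat [Nonempty A] (T : Set (List (A × B))) (bs : List B) : A :=
  agMoveAt T (agHist T bs.reverse)

lemma agHist_eq [Nonempty A] (T : Set (List (A × B))) (σenv : List A → B) :
    ∀ k : ℕ, agHist T ((playPrefix (agStrat T) σenv k).map Prod.snd).reverse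
      = playPrefix (agStrat T) σenv k := by
  intro k
  induction k with
  | zero => rfl
  | succ k ih =>
      have hps : playPrefix (agStrat T) σenv (k + 1)
          = playPrefix (agStrat T) σenv k
            ++ [(agStrat T ((playPrefix (agStrat T) σenv k).map Prod.snd),
                 σenv ((playPrefix (agStrat T) σenv k).map Prod.fst
                   ++ [agStrat T ((playPrefix (agStrat T) σenv k).map Prod.snd)]))] := rfl
      rw [hps, List.map_append, List.reverse_append]
      simp only [List.map_cons, List.map_nil, List.reverse_cons, List.reverse_nil,
        List.nil_append, List.singleton_append]
      rw [agHist, ih, agStrat, ih]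

lemma agStrat_at [Nonempty A] (T : Set (List (A × B))) (σenv : List A → B) (k : ℕ) :
    agStrat T ((playPrefix (agStrat T) σenv k).map Prod.snd)
      = agMoveAt T (playPrefix (agStrat T) σenv k) := by
  rw [agStrat, agHist_eq]

lemma pre_play (σag : List B → A) (σenv : List A → B) :
    ∀ k : ℕ, pre (play σag σenv) k = playPrefix σag σenv k := by
  intro k
  induction k with
  | zero => rfl
  | succ k ih =>
      rw [pre, List.range_succ, List.map_append]
      rw [pre] at ih
      rw [ih, List.map_singleton]
      rfl

lemma playPrefix_length (σag : List B → A) (σenv : List A → B) :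
    ∀ k : ℕ, (playPrefix σag σenv k).length = k := by
  intro k
  induction k with
  | zero => rfl
  | succ k ih =>
      show (playPrefix σag σenv k ++ [_]).length = k + 1
      rw [List.length_append, ih]
      rfl

lemma agent_reach [Nonempty A] {T : Set (List (A × B))} (hw : Win T []) :
    AgentEnforces (agStrat T) (Reach T) := by
  intro σenv
  suffices H : ∀ n k : ℕ, Win T (playPrefix (agStrat T) σenv k) →
      rank T (playPrefix (agStrat T) σenv k) ≤ n →
      ∃ m, 1 ≤ m ∧ pre (play (agStrat T) σenv) m ∈ T by
    exact H (rank T ([] : List (A × B))) 0 hw le_rfl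
  intro n
  induction n with
  | zero =>
      intro k hk hrk
      by_cases hmem : playPrefix (agStrat T) σenv k ≠ [] ∧ playPrefix (agStrat T) σenv k ∈ T
      · refine ⟨k, ?_, ?_⟩
        · rcases Nat.eq_zero_or_pos k with h0 | h0
          · exact absurd (by rw [h0]; rfl) hmem.1
          · exact h0
        · rw [pre_play]; exact hmem.2
      · have := (agent_step hk hmem).1
        omega
  | succ n ih =>
      intro k hk hrk
      by_cases hmem : playPrefix (agStrat T) σenv k ≠ [] ∧ playPrefix (agStrat T) σenv k ∈ T
      · refine ⟨k, ?_, ?_⟩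
        · rcases Nat.eq_zero_or_pos k with h0 | h0
          · exact absurd (by rw [h0]; rfl) hmem.1
          · exact h0
        · rw [pre_play]; exact hmem.2
      · obtain ⟨hr1, hstep⟩ := agent_step hk hmem
        have hnext : playPrefix (agStrat T) σenv (k + 1)
            = playPrefix (agStrat T) σenv k
              ++ [(agMoveAt T (playPrefix (agStrat T) σenv k),
                   σenv ((playPrefix (agStrat T) σenv k).map Prod.fst
                     ++ [agMoveAt T (playPrefix (agStrat T) σenv k)]))] := by
          have hps : playPrefix (agStrat T) σenv (k + 1)
              = playPrefix (agStrat T) σenv k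
                ++ [(agStrat T ((playPrefix (agStrat T) σenv k).map Prod.snd),
                     σenv ((playPrefix (agStrat T) σenv k).map Prod.fst
                       ++ [agStrat T ((playPrefix (agStrat T) σenv k).map Prod.snd)]))] := rfl
          rw [hps, agStrat_at]
        have hwin' : WinN T (rank T (playPrefix (agStrat T) σenv k) - 1)
            (playPrefix (agStrat T) σenv (k + 1)) := by
          rw [hnext]; exact hstep _
        have hW : Win T (playPrefix (agStrat T) σenv (k + 1)) := ⟨_, hwin'⟩
        have hrle : rank T (playPrefix (agStrat T) σenv (k + 1)) ≤ n := by
          have hx : (rank T (playPrefix (agStrat T) σenv k) - 1)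
              ∈ {n | WinN T n (playPrefix (agStrat T) σenv (k + 1))} := hwin'
          have h2 : rank T (playPrefix (agStrat T) σenv (k + 1))
              ≤ rank T (playPrefix (agStrat T) σenv k) - 1 := Nat.sInf_le hx
          omega
        exact ih (k + 1) hW hrle

open Classical in
/-- The environment's move at history `h` after agent move `a`. -/
noncomputable def envMoveAt [Nonempty B] (T : Set (List (A × B))) (h : List (A × B))
    (a : A) : B :=
  if hb : ∃ b : B, ¬ Win T (h ++ [(a, b)]) then hb.choose else Classical.arbitrary B

lemma envMoveAt_spec [Nonempty B] {T : Set (List (A × B))} {h : List (A × B)} {a : A}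
    (hex : ∃ b : B, ¬ Win T (h ++ [(a, b)])) : ¬ Win T (h ++ [(a, envMoveAt T h a)]) := by
  rw [envMoveAt, dif_pos hex]
  exact hex.choose_spec

/-- Reconstruction of the history from the (reversed) list of agent moves,
assuming the environment plays `envMoveAt`. -/
noncomputable def envHist [Nonempty B] (T : Set (List (A × B))) : List A → List (A × B)
  | [] => []
  | a :: r => envHist T r ++ [(a, envMoveAt T (envHist T r) a)]

/-- The environment's trap strategy. -/
noncomputable def envStrat [Nonempty B] (T : Set (List (A × B))) (as : List A) : B :=
  match as.reverse with
  | [] => Classical.arbitrary B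
  | a :: r => envMoveAt T (envHist T r) a

lemma envStrat_eq [Nonempty B] (T : Set (List (A × B))) (l : List A) (a : A) :
    envStrat T (l ++ [a]) = envMoveAt T (envHist T l.reverse) a := by
  rw [envStrat, List.reverse_append]
  simp only [List.reverse_cons, List.reverse_nil, List.nil_append, List.singleton_append]

lemma env_next [Nonempty B] (T : Set (List (A × B))) (σag : List B → A) :
    ∀ k : ℕ,
      envHist T ((playPrefix σag (envStrat T) k).map Prod.fst).reverse
        = playPrefix σag (envStrat T) k := by
  intro k
  induction k with
  | zero => rfl
  | succ k ih =>
      have hb : envStrat T ((playPrefix σag (envStrat T) k).map Prod.fst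
            ++ [σag ((playPrefix σag (envStrat T) k).map Prod.snd)])
          = envMoveAt T (playPrefix σag (envStrat T) k)
              (σag ((playPrefix σag (envStrat T) k).map Prod.snd)) := by
        rw [envStrat_eq, ih]
      have hps : playPrefix σag (envStrat T) (k + 1)
          = playPrefix σag (envStrat T) k
            ++ [(σag ((playPrefix σag (envStrat T) k).map Prod.snd),
                 envStrat T ((playPrefix σag (envStrat T) k).map Prod.fst
                   ++ [σag ((playPrefix σag (envStrat T) k).map Prod.snd)]))] := rfl
      rw [hps, hb, List.map_append, List.reverse_append]
      simp only [List.map_cons, List.map_nil, List.reverse_cons, List.reverse_nil,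
        List.nil_append, List.singleton_append]
      rw [envHist, ih]

lemma env_step [Nonempty B] (T : Set (List (A × B))) (σag : List B → A) (k : ℕ) :
    playPrefix σag (envStrat T) (k + 1)
      = playPrefix σag (envStrat T) k
        ++ [(σag ((playPrefix σag (envStrat T) k).map Prod.snd),
             envMoveAt T (playPrefix σag (envStrat T) k)
               (σag ((playPrefix σag (envStrat T) k).map Prod.snd)))] := by
  have hb : envStrat T ((playPrefix σag (envStrat T) k).map Prod.fst
        ++ [σag ((playPrefix σag (envStrat T) k).map Prod.snd)])
      = envMoveAt T (playPrefix σag (envStrat T) k)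
          (σag ((playPrefix σag (envStrat T) k).map Prod.snd)) := by
    rw [envStrat_eq, env_next]
  have hps : playPrefix σag (envStrat T) (k + 1)
      = playPrefix σag (envStrat T) k
        ++ [(σag ((playPrefix σag (envStrat T) k).map Prod.snd),
             envStrat T ((playPrefix σag (envStrat T) k).map Prod.fst
               ++ [σag ((playPrefix σag (envStrat T) k).map Prod.snd)]))] := rfl
  rw [hps, hb]

lemma env_notWin [Fintype B] [Nonempty B] {T : Set (List (A × B))} (hn : ¬ Win T [])
    (σag : List B → A) : ∀ k : ℕ, ¬ Win T (playPrefix σag (envStrat T) k) := by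
  intro k
  induction k with
  | zero => exact hn
  | succ k ih =>
      rw [env_step]
      exact envMoveAt_spec (notWin_step ih _)

lemma env_safe [Fintype B] [Nonempty B] {T : Set (List (A × B))} (hn : ¬ Win T []) :
    EnvEnforces (envStrat T) (Safe {w : List (A × B) | w ≠ [] ∧ w ∉ T}) := by
  intro σag k hk
  have hnw := env_notWin hn σag k
  have hne : playPrefix σag (envStrat T) k ≠ [] := by
    intro e
    have hl := playPrefix_length σag (envStrat T) k
    rw [e] at hl
    simp at hl
    omega
  have hnT : playPrefix σag (envStrat T) k ∉ T := by
    intro hT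
    exact hnw ⟨0, hne, hT⟩
  rw [Set.mem_setOf_eq, pre_play]
  exact ⟨hne, hnT⟩

end ReachDet

/-- Determinacy of reachability games: for every set `T` of nonempty finite
words over `A × B`, exactly one of the following holds: (i) some agent strategy
enforces `Reach T`; (ii) some environment strategy enforces `Safe T'`, where
`T'` is the set of nonempty finite words not in `T`. -/
theorem reach_safe_determinacy_agent_reach {A B : Type}
    [Fintype A] [Fintype B] [Nonempty A] [Nonempty B]
    (T : Set (List (A × B))) :
    Xor' (∃ σag : List B → A, AgentEnforces σag (Reach T))
      (∃ σenv : List A → B,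
        EnvEnforces σenv (Safe {w : List (A × B) | w ≠ [] ∧ w ∉ T})) := by
  have hnotboth : ¬ ((∃ σag : List B → A, AgentEnforces σag (Reach T)) ∧
      (∃ σenv : List A → B,
        EnvEnforces σenv (Safe {w : List (A × B) | w ≠ [] ∧ w ∉ T}))) := by
    rintro ⟨⟨σag, hag⟩, ⟨σenv, henv⟩⟩
    obtain ⟨k, hk1, hkT⟩ := hag σenv
    exact (henv σag k hk1).2 hkT
  by_cases hw : ReachDet.Win T ([] : List (A × B))
  · exact Or.inl ⟨⟨_, ReachDet.agent_reach hw⟩, fun h => hnotboth ⟨⟨_, ReachDet.agent_reach hw⟩, h⟩⟩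
  · exact Or.inr ⟨⟨_, ReachDet.env_safe hw⟩, fun h => hnotboth ⟨h, ⟨_, ReachDet.env_safe hw⟩⟩⟩
end

section
/- Determinacy of reachability/safety games (agent safety): for every set T of nonempty finite words over A × B, exactly one of the following holds: (i) there exists an agent strategy enforcing Safe T; (ii) there exists an environment strategy enforcing Reach T', where T' is the set of nonempty finite words over A × B that are not in T. -/
section Determinacy

variable {A B : Type}

/-- `GoodN T n h`: from history `h`, the agent can survive `n` more rounds
keeping every extended history in `T`. -/
def GoodN (T : Set (List (A × B))) : ℕ → List (A × B) → Prop
  | 0, _ => True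
  | n + 1, h => ∃ a : A, ∀ b : B, (h ++ [(a, b)]) ∈ T ∧ GoodN T n (h ++ [(a, b)])

lemma goodN_succ_imp (T : Set (List (A × B))) :
    ∀ n (h : List (A × B)), GoodN T (n + 1) h → GoodN T n h := by
  intro n
  induction n with
  | zero => intro h _; trivial
  | succ n ih =>
    intro h hg
    obtain ⟨a, ha⟩ := hg
    exact ⟨a, fun b => ⟨(ha b).1, ih _ (ha b).2⟩⟩

lemma goodN_le (T : Set (List (A × B))) {m n : ℕ} (hmn : m ≤ n) :
    ∀ h : List (A × B), GoodN T n h → GoodN T m h := by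
  induction hmn with
  | refl => exact fun h hg => hg
  | step _ ih => exact fun h hg => ih h (goodN_succ_imp T _ h hg)

/-- The agent can survive forever. -/
def GoodInf (T : Set (List (A × B))) (h : List (A × B)) : Prop := ∀ n, GoodN T n h

lemma goodInf_step [Fintype A] [Nonempty A] (T : Set (List (A × B))) (h : List (A × B))
    (hg : GoodInf T h) :
    ∃ a : A, ∀ b : B, (h ++ [(a, b)]) ∈ T ∧ GoodInf T (h ++ [(a, b)]) := by
  classical
  set W : A → Set ℕ := fun a => {n | ∀ b : B, (h ++ [(a, b)]) ∈ T ∧ GoodN T n (h ++ [(a, b)])}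
    with hW
  have hmem : ∀ n : ℕ, ∃ a : A, n ∈ W a := fun n => hg (n + 1)
  have hinf : ∃ a : A, (W a).Infinite := by
    by_contra hc
    push_neg at hc
    have hfin : (⋃ a : A, W a).Finite := Set.finite_iUnion hc
    have huniv : (Set.univ : Set ℕ) ⊆ ⋃ a : A, W a := by
      intro n _
      exact Set.mem_iUnion.2 (hmem n)
    exact Set.infinite_univ (hfin.subset huniv)
  obtain ⟨a, ha⟩ := hinf
  have hbig : ∀ n : ℕ, ∃ m ∈ W a, n ≤ m := by
    intro n
    by_contra hcon
    push_neg at hcon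
    have : (W a) ⊆ Set.Iio n := fun m hm => hcon m hm
    exact ha ((Set.finite_Iio n).subset this)
  refine ⟨a, fun b => ⟨?_, ?_⟩⟩
  · obtain ⟨m, hm, _⟩ := hbig 0
    exact (hm b).1
  · intro n
    obtain ⟨m, hm, hnm⟩ := hbig n
    exact goodN_le T hnm _ (hm b).2

lemma notGoodN_step (T : Set (List (A × B))) {n : ℕ} {h : List (A × B)}
    (hng : ¬ GoodN T (n + 1) h) (a : A) :
    ∃ b : B, (h ++ [(a, b)]) ∉ T ∨ ¬ GoodN T n (h ++ [(a, b)]) := by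
  simp only [GoodN] at hng
  push_neg at hng
  obtain ⟨b, hb⟩ := hng a
  by_cases hT : (h ++ [(a, b)]) ∈ T
  · exact ⟨b, Or.inr (hb hT)⟩
  · exact ⟨b, Or.inl hT⟩

/-- Reconstruct the history from the list of environment moves, given the
agent's choice function `f`. -/
def histA (f : List (A × B) → A) : List (A × B) → List B → List (A × B)
  | acc, [] => acc
  | acc, b :: bs => histA f (acc ++ [(f acc, b)]) bs

lemma histA_append (f : List (A × B) → A) :
    ∀ (bs : List B) (acc : List (A × B)) (b : B),
      histA f acc (bs ++ [b]) = histA f acc bs ++ [(f (histA f acc bs), b)] := by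
  intro bs
  induction bs with
  | nil => intro acc b; simp [histA]
  | cons b0 bs ih =>
    intro acc b
    simp only [List.cons_append, histA]
    exact ih _ _

/-- Reconstruct the history from the list of agent moves, given the
environment's choice function `g`. -/
def histE (g : List (A × B) → A → B) : List (A × B) → List A → List (A × B)
  | acc, [] => acc
  | acc, a :: as => histE g (acc ++ [(a, g acc a)]) as

lemma histE_append (g : List (A × B) → A → B) :
    ∀ (as : List A) (acc : List (A × B)) (a : A),
      histE g acc (as ++ [a]) = histE g acc as ++ [(a, g (histE g acc as) a)] := by
  intro as
  induction as with
  | nil => intro acc a; simp [histE]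
  | cons a0 as ih =>
    intro acc a
    simp only [List.cons_append, histE]
    exact ih _ _

/-- Second component of the last pair of a list. -/
noncomputable def lastSnd [Nonempty B] (l : List (A × B)) : B :=
  ((l.getLast?).map Prod.snd).getD (Classical.arbitrary B)

lemma lastSnd_concat [Nonempty B] (l : List (A × B)) (p : A × B) :
    lastSnd (l ++ [p]) = p.2 := by
  have h : (l ++ [p]).getLast? = some p := by
    rw [List.getLast?_append_of_ne_nil l (by simp)]
    rfl
  simp [lastSnd, h]

/-- The agent strategy induced by a choice function on histories. -/
def agStrat (f : List (A × B) → A) (bs : List B) : A := f (histA f [] bs)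

/-- The environment strategy induced by a choice function on histories. -/
noncomputable def envStrat [Nonempty B] (g : List (A × B) → A → B) (as : List A) : B :=
  lastSnd (histE g [] as)

lemma playPrefix_succ (σag : List B → A) (σenv : List A → B) (k : ℕ) :
    playPrefix σag σenv (k + 1) = playPrefix σag σenv k ++ [play σag σenv k] := rfl

lemma play_eq (σag : List B → A) (σenv : List A → B) (k : ℕ) :
    play σag σenv k =
      (σag ((playPrefix σag σenv k).map Prod.snd),
       σenv ((playPrefix σag σenv k).map Prod.fst ++
         [σag ((playPrefix σag σenv k).map Prod.snd)])) := rfl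

lemma length_playPrefix (σag : List B → A) (σenv : List A → B) :
    ∀ k, (playPrefix σag σenv k).length = k := by
  intro k
  induction k with
  | zero => rfl
  | succ k ih => simp [playPrefix_succ, ih]

lemma pre_play (σag : List B → A) (σenv : List A → B) :
    ∀ k, pre (play σag σenv) k = playPrefix σag σenv k := by
  intro k
  induction k with
  | zero => rfl
  | succ k ih =>
    rw [playPrefix_succ, ← ih]
    simp [pre, List.range_succ]

lemma reconA (f : List (A × B) → A) (σenv : List A → B) :
    ∀ k, histA f [] ((playPrefix (agStrat f) σenv k).map Prod.snd)
        = playPrefix (agStrat f) σenv k := by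
  intro k
  induction k with
  | zero => rfl
  | succ k ih =>
    rw [playPrefix_succ, play_eq, List.map_append]
    have ha : agStrat f ((playPrefix (agStrat f) σenv k).map Prod.snd)
        = f (playPrefix (agStrat f) σenv k) := by
      rw [agStrat, ih]
    simp only [List.map_cons, List.map_nil, histA_append, ih, ha]

lemma agStrat_play (f : List (A × B) → A) (σenv : List A → B) (k : ℕ) :
    agStrat f ((playPrefix (agStrat f) σenv k).map Prod.snd)
      = f (playPrefix (agStrat f) σenv k) := by
  rw [agStrat, reconA]

lemma reconE [Nonempty B] (g : List (A × B) → A → B) (σag : List B → A) :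
    ∀ k, histE g [] ((playPrefix σag (envStrat g) k).map Prod.fst)
        = playPrefix σag (envStrat g) k := by
  intro k
  induction k with
  | zero => rfl
  | succ k ih =>
    rw [playPrefix_succ, play_eq, List.map_append]
    have hb : envStrat g ((playPrefix σag (envStrat g) k).map Prod.fst ++
        [σag ((playPrefix σag (envStrat g) k).map Prod.snd)]) =
        g (playPrefix σag (envStrat g) k)
          (σag ((playPrefix σag (envStrat g) k).map Prod.snd)) := by
      rw [envStrat, histE_append, ih, lastSnd_concat]
    simp only [List.map_cons, List.map_nil, histE_append, ih, hb]

lemma envStrat_play [Nonempty B] (g : List (A × B) → A → B) (σag : List B → A) (k : ℕ) :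
    play σag (envStrat g) k =
      (σag ((playPrefix σag (envStrat g) k).map Prod.snd),
       g (playPrefix σag (envStrat g) k)
         (σag ((playPrefix σag (envStrat g) k).map Prod.snd))) := by
  rw [play_eq]
  congr 1
  rw [envStrat, histE_append, reconE, lastSnd_concat]

/-- If the agent can survive forever from the empty history, it has a
strategy enforcing `Safe T`. -/
lemma agent_wins [Fintype A] [Nonempty A] (T : Set (List (A × B)))
    (hg : GoodInf T []) : ∃ σag : List B → A, AgentEnforces σag (Safe T) := by
  classical
  set f : List (A × B) → A := fun h =>
    if hgh : GoodInf T h then Classical.choose (goodInf_step T h hgh)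
    else Classical.arbitrary A with hf
  have hstep : ∀ h : List (A × B), GoodInf T h →
      ∀ b : B, (h ++ [(f h, b)]) ∈ T ∧ GoodInf T (h ++ [(f h, b)]) := by
    intro h hgh b
    have : f h = Classical.choose (goodInf_step T h hgh) := by
      rw [hf]; exact dif_pos hgh
    rw [this]
    exact Classical.choose_spec (goodInf_step T h hgh) b
  refine ⟨agStrat f, fun σenv => ?_⟩
  have key : ∀ k, GoodInf T (playPrefix (agStrat f) σenv k) ∧
      (1 ≤ k → playPrefix (agStrat f) σenv k ∈ T) := by
    intro k
    induction k with
    | zero => exact ⟨hg, by omega⟩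
    | succ k ih =>
      rw [playPrefix_succ, play_eq, agStrat_play]
      obtain ⟨hgk, _⟩ := ih
      have := hstep _ hgk (σenv ((playPrefix (agStrat f) σenv k).map Prod.fst ++
        [f (playPrefix (agStrat f) σenv k)]))
      exact ⟨this.2, fun _ => this.1⟩
  intro k hk
  rw [pre_play]
  exact (key k).2 hk

/-- If the agent cannot survive `n` rounds from the empty history, the
environment has a strategy enforcing reaching the complement of `T`. -/
lemma env_wins [Nonempty A] [Nonempty B] (T : Set (List (A × B))) (n : ℕ)
    (hng : ¬ GoodN T n []) :
    ∃ σenv : List A → B,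
      EnvEnforces σenv (Reach {w : List (A × B) | w ≠ [] ∧ w ∉ T}) := by
  classical
  have hchoice : ∀ (h : List (A × B)) (a : A), ∃ b : B,
      (h.length < n ∧ ¬ GoodN T (n - h.length) h) →
      ((h ++ [(a, b)]) ∉ T ∨ ¬ GoodN T (n - (h.length + 1)) (h ++ [(a, b)])) := by
    intro h a
    by_cases hc : h.length < n ∧ ¬ GoodN T (n - h.length) h
    · have hm : n - h.length = (n - (h.length + 1)) + 1 := by omega
      rw [hm] at hc
      obtain ⟨b, hb⟩ := notGoodN_step T hc.2 a
      exact ⟨b, fun _ => hb⟩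
    · exact ⟨Classical.arbitrary B, fun h' => absurd h' hc⟩
  set g : List (A × B) → A → B := fun h a => Classical.choose (hchoice h a) with hgdef
  have hgspec : ∀ (h : List (A × B)) (a : A),
      (h.length < n ∧ ¬ GoodN T (n - h.length) h) →
      ((h ++ [(a, g h a)]) ∉ T ∨ ¬ GoodN T (n - (h.length + 1)) (h ++ [(a, g h a)])) :=
    fun h a => Classical.choose_spec (hchoice h a)
  refine ⟨envStrat g, fun σag => ?_⟩
  have inv : ∀ k, k ≤ n →
      (∃ j, 1 ≤ j ∧ j ≤ k ∧ playPrefix σag (envStrat g) j ∉ T) ∨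
        ¬ GoodN T (n - k) (playPrefix σag (envStrat g) k) := by
    intro k
    induction k with
    | zero =>
      intro _
      refine Or.inr ?_
      rw [Nat.sub_zero]
      exact hng
    | succ k ih =>
      intro hk
      rcases ih (by omega) with hl | hr
      · obtain ⟨j, hj1, hj2, hj3⟩ := hl
        exact Or.inl ⟨j, hj1, by omega, hj3⟩
      · have hlen : (playPrefix σag (envStrat g) k).length = k := length_playPrefix _ _ k
        have hcond : (playPrefix σag (envStrat g) k).length < n ∧
            ¬ GoodN T (n - (playPrefix σag (envStrat g) k).length)
              (playPrefix σag (envStrat g) k) := by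
          rw [hlen]; exact ⟨by omega, hr⟩
        have hspec := hgspec (playPrefix σag (envStrat g) k)
          (σag ((playPrefix σag (envStrat g) k).map Prod.snd)) hcond
        have hHk1 : playPrefix σag (envStrat g) (k + 1) = playPrefix σag (envStrat g) k ++
            [(σag ((playPrefix σag (envStrat g) k).map Prod.snd),
              g (playPrefix σag (envStrat g) k)
                (σag ((playPrefix σag (envStrat g) k).map Prod.snd)))] := by
          rw [playPrefix_succ, envStrat_play]
        rw [hlen] at hspec
        rcases hspec with hout | hng'
        · exact Or.inl ⟨k + 1, by omega, le_refl _, by rw [hHk1]; exact hout⟩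
        · exact Or.inr (by rw [hHk1]; exact hng')
  rcases inv n (le_refl n) with hl | hr
  · obtain ⟨j, hj1, _, hj3⟩ := hl
    refine ⟨j, hj1, ?_, ?_⟩
    · rw [pre_play]
      intro hnil
      have hlj := length_playPrefix σag (envStrat g) j
      rw [hnil] at hlj
      simp at hlj
      omega
    · rw [pre_play]; exact hj3
  · rw [Nat.sub_self] at hr
    exact absurd trivial hr

lemma not_both {T : Set (List (A × B))}
    (hag : ∃ σag : List B → A, AgentEnforces σag (Safe T))
    (henv : ∃ σenv : List A → B,
      EnvEnforces σenv (Reach {w : List (A × B) | w ≠ [] ∧ w ∉ T})) : False := by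
  obtain ⟨σag, hag⟩ := hag
  obtain ⟨σenv, henv⟩ := henv
  obtain ⟨k, hk1, _, hkT⟩ := henv σag
  exact hkT (hag σenv k hk1)

end Determinacy


/-- Determinacy of safety games: for every set `T` of nonempty finite words
over `A × B`, exactly one of the following holds: (i) some agent strategy
enforces `Safe T`; (ii) some environment strategy enforces `Reach T'`, where
`T'` is the set of nonempty finite words not in `T`. -/
theorem reach_safe_determinacy_agent_safe {A B : Type}
    [Fintype A] [Fintype B] [Nonempty A] [Nonempty B]
    (T : Set (List (A × B))) :
    Xor' (∃ σag : List B → A, AgentEnforces σag (Safe T))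
      (∃ σenv : List A → B,
        EnvEnforces σenv (Reach {w : List (A × B) | w ≠ [] ∧ w ∉ T})) := by
  by_cases hg : GoodInf T ([] : List (A × B))
  · have hag := agent_wins T hg
    exact Or.inl ⟨hag, fun henv => not_both hag henv⟩
  · have hn : ∃ n, ¬ GoodN T n ([] : List (A × B)) := by
      by_contra hc
      push_neg at hc
      exact hg hc
    obtain ⟨n, hn⟩ := hn
    have henv := env_wins T n hn
    exact Or.inr ⟨henv, fun hag => not_both hag henv⟩
end

section
/- Determinacy of the combined reachability/safety games considered in the paper: for all sets T₁, T₂, T₃, T₄ of nonempty finite words over A × B, letting P := Reach T₁ ∪ Safe T₂ ∪ (Reach T₃ ∩ Safe T₄) ⊆ (ℕ → A × B), exactly one of the following holds: (i) there exists an agent strategy enforcing P; (ii) there exists an environment strategy enforcing the complement of P. -/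
namespace CRS
open Classical
set_option linter.unusedSectionVars false

variable {A B : Type}

/-! ### prefixes of plays -/

theorem pre_succ {α : Type} (π : ℕ → α) (k : ℕ) : pre π (k+1) = pre π k ++ [π k] := by
  simp [pre, List.range_succ]

theorem length_pre {α : Type} (π : ℕ → α) (k : ℕ) : (pre π k).length = k := by
  simp [pre]

theorem take_pre {α : Type} (π : ℕ → α) {j k : ℕ} (h : j ≤ k) :
    (pre π k).take j = pre π j := by
  simp [pre, ← List.map_take, List.take_range, Nat.min_eq_left h]

theorem pre_play (σag : List B → A) (σenv : List A → B) :
    ∀ k, pre (play σag σenv) k = playPrefix σag σenv k := by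
  intro k
  induction k with
  | zero => rfl
  | succ k ih => rw [pre_succ, ih]; rfl

/-! ### hit / keep predicates on histories -/

def hits (T : Set (List (A × B))) (h : List (A × B)) : Prop :=
  ∃ k, 1 ≤ k ∧ k ≤ h.length ∧ h.take k ∈ T

def keeps (T : Set (List (A × B))) (h : List (A × B)) : Prop :=
  ∀ k, 1 ≤ k → k ≤ h.length → h.take k ∈ T

theorem hits_pre {T : Set (List (A × B))} {π : ℕ → A × B} {m : ℕ} :
    hits T (pre π m) ↔ ∃ k, 1 ≤ k ∧ k ≤ m ∧ pre π k ∈ T := by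
  constructor
  · rintro ⟨k, h1, h2, h3⟩
    rw [length_pre] at h2
    exact ⟨k, h1, h2, by rwa [take_pre _ h2] at h3⟩
  · rintro ⟨k, h1, h2, h3⟩
    exact ⟨k, h1, by rw [length_pre]; exact h2, by rwa [take_pre _ h2]⟩

theorem keeps_pre {T : Set (List (A × B))} {π : ℕ → A × B} {m : ℕ} :
    keeps T (pre π m) ↔ ∀ k, 1 ≤ k → k ≤ m → pre π k ∈ T := by
  constructor
  · intro H k h1 h2
    have := H k h1 (by rw [length_pre]; exact h2)
    rwa [take_pre _ h2] at this
  · intro H k h1 h2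
    rw [length_pre] at h2
    rw [take_pre _ h2]; exact H k h1 h2

theorem reach_iff {T : Set (List (A × B))} {π : ℕ → A × B} :
    π ∈ Reach T ↔ ∃ m, hits T (pre π m) := by
  constructor
  · rintro ⟨k, h1, h2⟩
    exact ⟨k, hits_pre.2 ⟨k, h1, le_refl k, h2⟩⟩
  · rintro ⟨m, hm⟩
    obtain ⟨k, h1, _, h3⟩ := hits_pre.1 hm
    exact ⟨k, h1, h3⟩

theorem safe_iff {T : Set (List (A × B))} {π : ℕ → A × B} :
    π ∈ Safe T ↔ ∀ m, keeps T (pre π m) := by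
  constructor
  · intro H m
    exact keeps_pre.2 fun k h1 _ => H k h1
  · intro H k h1
    have := keeps_pre.1 (H k) k h1 (le_refl k)
    exact this

/-! ### reachability fixpoints via approximants -/

section Fix
variable [Fintype A] [Fintype B]

/-- agent can force reaching `G` within `n` steps -/
def ARn (G : List (A × B) → Prop) : ℕ → List (A × B) → Prop
  | 0, h => G h
  | n+1, h => ARn G n h ∨ ∃ a, ∀ b, ARn G n (h ++ [(a, b)])

def AReach (G : List (A × B) → Prop) (h : List (A × B)) : Prop := ∃ n, ARn G n h

/-- environment can force reaching `G` within `n` steps, staying in `C` -/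
def ERn (C G : List (A × B) → Prop) : ℕ → List (A × B) → Prop
  | 0, h => C h ∧ G h
  | n+1, h => ERn C G n h ∨ (C h ∧ ∀ a, ∃ b, ERn C G n (h ++ [(a, b)]))

def EReach (C G : List (A × B) → Prop) (h : List (A × B)) : Prop := ∃ n, ERn C G n h

theorem ARn_mono {G : List (A × B) → Prop} {m n : ℕ} (hmn : m ≤ n) {h : List (A × B)}
    (hm : ARn G m h) : ARn G n h := by
  induction n with
  | zero => rwa [Nat.le_zero.1 hmn] at hm
  | succ n ih =>
    rcases Nat.lt_or_ge m (n+1) with hlt | hge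
    · exact Or.inl (ih (Nat.lt_succ_iff.1 hlt))
    · rwa [le_antisymm hmn hge] at hm

theorem ERn_mono {C G : List (A × B) → Prop} {m n : ℕ} (hmn : m ≤ n) {h : List (A × B)}
    (hm : ERn C G m h) : ERn C G n h := by
  induction n with
  | zero => rwa [Nat.le_zero.1 hmn] at hm
  | succ n ih =>
    rcases Nat.lt_or_ge m (n+1) with hlt | hge
    · exact Or.inl (ih (Nat.lt_succ_iff.1 hlt))
    · rwa [le_antisymm hmn hge] at hm

theorem ARn_mono_G {G G' : List (A × B) → Prop} (hGG : ∀ h, G h → G' h) :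
    ∀ n h, ARn G n h → ARn G' n h := by
  intro n
  induction n with
  | zero => exact hGG
  | succ n ih =>
    rintro h (hh | ⟨a, ha⟩)
    · exact Or.inl (ih h hh)
    · exact Or.inr ⟨a, fun b => ih _ (ha b)⟩

theorem ERn_C {C G : List (A × B) → Prop} : ∀ {n h}, ERn C G n h → C h := by
  intro n
  induction n with
  | zero => exact fun h => h.1
  | succ n ih =>
    rintro h (hh | ⟨hC, _⟩)
    · exact ih hh
    · exact hC

theorem EReach_C {C G : List (A × B) → Prop} {h : List (A × B)} (hh : EReach C G h) : C h := by
  obtain ⟨n, hn⟩ := hh; exact ERn_C hn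

/-- uniform bound for finitely many approximant witnesses -/
theorem bdd {ι : Type} [Fintype ι] (p : ι → ℕ → Prop)
    (mono : ∀ i m n, m ≤ n → p i m → p i n) (hp : ∀ i, ∃ n, p i n) :
    ∃ N, ∀ i, p i N :=
  ⟨Finset.univ.sup fun i => Nat.find (hp i), fun i =>
    mono i _ _ (Finset.le_sup (Finset.mem_univ i)) (Nat.find_spec (hp i))⟩

noncomputable def rankA (G : List (A × B) → Prop) (h : List (A × B)) : ℕ :=
  if hh : AReach G h then Nat.find hh else 0

noncomputable def rankE (C G : List (A × B) → Prop) (h : List (A × B)) : ℕ :=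
  if hh : EReach C G h then Nat.find hh else 0

theorem rankA_le {G : List (A × B) → Prop} {h : List (A × B)} {m : ℕ} (hm : ARn G m h) :
    rankA G h ≤ m := by
  have hh : AReach G h := ⟨m, hm⟩
  rw [rankA, dif_pos hh]
  exact Nat.find_le hm

theorem rankE_le {C G : List (A × B) → Prop} {h : List (A × B)} {m : ℕ} (hm : ERn C G m h) :
    rankE C G h ≤ m := by
  have hh : EReach C G h := ⟨m, hm⟩
  rw [rankE, dif_pos hh]
  exact Nat.find_le hm

theorem mem_AReach_succ {G : List (A × B) → Prop} {h : List (A × B)}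
    (hh : AReach G h) (hG : ¬ G h) :
    ∃ a, ∀ b, AReach G (h ++ [(a, b)]) ∧ rankA G (h ++ [(a, b)]) < rankA G h := by
  have hfind : ARn G (Nat.find hh) h := Nat.find_spec hh
  have hrk : rankA G h = Nat.find hh := dif_pos hh
  rcases hn : Nat.find hh with _ | m
  · rw [hn] at hfind; exact absurd hfind hG
  · rw [hn] at hfind
    rcases hfind with hm | ⟨a, ha⟩
    · have h2 : Nat.find hh ≤ m := Nat.find_le hm
      omega
    · refine ⟨a, fun b => ⟨⟨m, ha b⟩, ?_⟩⟩
      have := rankA_le (ha b)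
      omega

theorem mem_EReach_succ {C G : List (A × B) → Prop} {h : List (A × B)}
    (hh : EReach C G h) (hG : ¬ G h) :
    C h ∧ ∀ a, ∃ b, EReach C G (h ++ [(a, b)]) ∧ rankE C G (h ++ [(a, b)]) < rankE C G h := by
  have hfind : ERn C G (Nat.find hh) h := Nat.find_spec hh
  have hrk : rankE C G h = Nat.find hh := dif_pos hh
  rcases hn : Nat.find hh with _ | m
  · rw [hn] at hfind; exact absurd hfind.2 hG
  · rw [hn] at hfind
    rcases hfind with hm | ⟨hC, ha⟩
    · have h2 : Nat.find hh ≤ m := Nat.find_le hm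
      omega
    · refine ⟨hC, fun a => ?_⟩
      obtain ⟨b, hb⟩ := ha a
      refine ⟨b, ⟨m, hb⟩, ?_⟩
      have := rankE_le hb
      omega

theorem not_AReach {G : List (A × B) → Prop} {h : List (A × B)} (hn : ¬ AReach G h) :
    ¬ G h ∧ ∀ a, ∃ b, ¬ AReach G (h ++ [(a, b)]) := by
  constructor
  · exact fun hG => hn ⟨0, hG⟩
  · intro a
    by_contra hb
    push_neg at hb
    obtain ⟨N, hN⟩ := bdd (fun b n => ARn G n (h ++ [(a, b)]))
      (fun b m n hmn => ARn_mono hmn) hb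
    exact hn ⟨N + 1, Or.inr ⟨a, hN⟩⟩

theorem not_EReach {C G : List (A × B) → Prop} {h : List (A × B)}
    (hn : ¬ EReach C G h) (hC : C h) :
    ¬ G h ∧ ∃ a, ∀ b, ¬ EReach C G (h ++ [(a, b)]) := by
  constructor
  · exact fun hG => hn ⟨0, hC, hG⟩
  · by_contra ha
    push_neg at ha
    have : ∀ a, ∃ n, ∃ b, ERn C G n (h ++ [(a, b)]) := by
      intro a
      obtain ⟨b, n, hb⟩ := ha a
      exact ⟨n, b, hb⟩
    obtain ⟨N, hN⟩ := bdd (fun a n => ∃ b, ERn C G n (h ++ [(a, b)]))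
      (fun a m n hmn ⟨b, hb⟩ => ⟨b, ERn_mono hmn hb⟩) this
    exact hn ⟨N + 1, Or.inr ⟨hC, hN⟩⟩

end Fix
end CRS
namespace CRS
open Classical
set_option linter.unusedSectionVars false

variable {A B : Type}

/-! ### history-based strategies -/

theorem playPrefix_succ (σag : List B → A) (σenv : List A → B) (k : ℕ) :
    playPrefix σag σenv (k+1)
      = playPrefix σag σenv k
        ++ [(σag ((playPrefix σag σenv k).map Prod.snd),
             σenv ((playPrefix σag σenv k).map Prod.fst
                    ++ [σag ((playPrefix σag σenv k).map Prod.snd)]))] := rfl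

def hist (τ : List (A × B) → A) (bs : List B) : List (A × B) :=
  bs.foldl (fun h b => h ++ [(τ h, b)]) []

theorem hist_concat (τ : List (A × B) → A) (bs : List B) (b : B) :
    hist τ (bs ++ [b]) = hist τ bs ++ [(τ (hist τ bs), b)] := by
  rw [hist, List.foldl_append]; rfl

def agentOf (τ : List (A × B) → A) : List B → A := fun bs => τ (hist τ bs)

theorem hist_prefix (τ : List (A × B) → A) (σenv : List A → B) :
    ∀ k, hist τ ((playPrefix (agentOf τ) σenv k).map Prod.snd)
        = playPrefix (agentOf τ) σenv k := by
  intro k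
  induction k with
  | zero => rfl
  | succ k ih =>
    rw [playPrefix_succ]
    simp only [List.map_append, List.map_cons, List.map_nil]
    rw [hist_concat, ih]
    simp only [agentOf, ih]

theorem agent_step (τ : List (A × B) → A) (σenv : List A → B) (k : ℕ) :
    ∃ b, playPrefix (agentOf τ) σenv (k+1)
      = playPrefix (agentOf τ) σenv k ++ [(τ (playPrefix (agentOf τ) σenv k), b)] := by
  refine ⟨σenv ((playPrefix (agentOf τ) σenv k).map Prod.fst
      ++ [agentOf τ ((playPrefix (agentOf τ) σenv k).map Prod.snd)]), ?_⟩
  rw [playPrefix_succ]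
  simp only [agentOf, hist_prefix]

def histE (υ : List (A × B) → A → B) (as : List A) : List (A × B) :=
  as.foldl (fun h a => h ++ [(a, υ h a)]) []

theorem histE_concat (υ : List (A × B) → A → B) (as : List A) (a : A) :
    histE υ (as ++ [a]) = histE υ as ++ [(a, υ (histE υ as) a)] := by
  rw [histE, List.foldl_append]; rfl

noncomputable def envOf [Nonempty B] (υ : List (A × B) → A → B) : List A → B := fun as =>
  if hne : as = [] then Classical.arbitrary B
  else υ (histE υ as.dropLast) (as.getLast hne)

theorem histE_prefix [Nonempty B] (υ : List (A × B) → A → B) (σag : List B → A) :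
    ∀ k, histE υ ((playPrefix σag (envOf υ) k).map Prod.fst)
        = playPrefix σag (envOf υ) k := by
  intro k
  induction k with
  | zero => rfl
  | succ k ih =>
    have hb : ∀ a, envOf (B := B) υ ((playPrefix σag (envOf υ) k).map Prod.fst ++ [a])
        = υ (playPrefix σag (envOf υ) k) a := by
      intro a
      rw [envOf]
      have hne : (playPrefix σag (envOf υ) k).map Prod.fst ++ [a] ≠ [] := by simp
      rw [dif_neg hne, List.dropLast_concat, List.getLast_concat, ih]
    rw [playPrefix_succ]
    simp only [List.map_append, List.map_cons, List.map_nil]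
    rw [histE_concat, ih, hb]

theorem env_step [Nonempty B] (υ : List (A × B) → A → B) (σag : List B → A) (k : ℕ) :
    ∃ a, playPrefix σag (envOf υ) (k+1)
      = playPrefix σag (envOf υ) k ++ [(a, υ (playPrefix σag (envOf υ) k) a)] := by
  refine ⟨σag ((playPrefix σag (envOf υ) k).map Prod.snd), ?_⟩
  rw [playPrefix_succ]
  have hne : (playPrefix σag (envOf υ) k).map Prod.fst
      ++ [σag ((playPrefix σag (envOf υ) k).map Prod.snd)] ≠ [] := by simp
  rw [envOf]
  rw [dif_neg hne, List.dropLast_concat, List.getLast_concat, histE_prefix]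

end CRS
namespace CRS
open Classical
set_option linter.unusedSectionVars false

variable {A B : Type} [Fintype A] [Fintype B] [Nonempty A] [Nonempty B]
variable (T₁ T₂ T₃ T₄ : Set (List (A × B)))

/-! ### the winning-region fixpoints for the combined game -/

/-- agent can force reaching a `T₁`-hit -/
abbrev R1 : List (A × B) → Prop := AReach (hits T₁)

/-- env can force breaking both `T₂` and `T₄` safety, staying clear of `R1` -/
abbrev Ya : List (A × B) → Prop :=
  EReach (fun h => ¬ R1 T₁ h) (fun h => ¬ keeps T₂ h ∧ ¬ keeps T₄ h)

abbrev G2 : List (A × B) → Prop := fun h => hits T₁ h ∨ (hits T₃ h ∧ ¬ Ya T₁ T₂ T₄ h)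

abbrev W2 : List (A × B) → Prop := AReach (G2 T₁ T₂ T₃ T₄)

/-- env can force breaking `T₂` safety, staying clear of `W2` -/
abbrev Y3 : List (A × B) → Prop :=
  EReach (fun h => ¬ W2 T₁ T₂ T₃ T₄ h) (fun h => ¬ keeps T₂ h)

theorem R1_subset_W2 {h : List (A × B)} (hh : R1 T₁ h) : W2 T₁ T₂ T₃ T₄ h := by
  obtain ⟨n, hn⟩ := hh
  exact ⟨n, ARn_mono_G (fun h hh => Or.inl hh) n h hn⟩

theorem hits_nil (T : Set (List (A × B))) : ¬ hits T ([] : List (A × B)) := by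
  rintro ⟨k, h1, h2, -⟩
  simp at h2
  omega

/-! ### the agent strategy -/

noncomputable def agStrat : List (A × B) → A := fun h =>
  if h1 : hits T₁ h then Classical.arbitrary A
  else if hR : R1 T₁ h then (mem_AReach_succ hR h1).choose
  else if h3 : hits T₃ h ∧ ¬ Ya T₁ T₂ T₄ h then (not_EReach h3.2 hR).2.choose
  else if hW : W2 T₁ T₂ T₃ T₄ h then (mem_AReach_succ hW (fun hg => hg.elim h1 h3)).choose
  else if hY : ¬ Y3 T₁ T₂ T₃ T₄ h then (not_EReach hY hW).2.choose
  else Classical.arbitrary A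

theorem agStrat_spec2 {h : List (A × B)} (h1 : ¬ hits T₁ h) (hR : R1 T₁ h) :
    ∀ b, R1 T₁ (h ++ [(agStrat T₁ T₂ T₃ T₄ h, b)]) ∧
      rankA (hits T₁) (h ++ [(agStrat T₁ T₂ T₃ T₄ h, b)]) < rankA (hits T₁) h := by
  intro b
  rw [agStrat, dif_neg h1, dif_pos hR]
  exact (mem_AReach_succ hR h1).choose_spec b

theorem agStrat_spec3 {h : List (A × B)} (h1 : ¬ hits T₁ h) (hR : ¬ R1 T₁ h)
    (h3 : hits T₃ h ∧ ¬ Ya T₁ T₂ T₄ h) :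
    ∀ b, ¬ Ya T₁ T₂ T₄ (h ++ [(agStrat T₁ T₂ T₃ T₄ h, b)]) := by
  rw [agStrat, dif_neg h1, dif_neg hR, dif_pos h3]
  exact (not_EReach h3.2 hR).2.choose_spec

theorem agStrat_spec4 {h : List (A × B)} (h1 : ¬ hits T₁ h) (hR : ¬ R1 T₁ h)
    (h3 : ¬ (hits T₃ h ∧ ¬ Ya T₁ T₂ T₄ h)) (hW : W2 T₁ T₂ T₃ T₄ h) :
    ∀ b, W2 T₁ T₂ T₃ T₄ (h ++ [(agStrat T₁ T₂ T₃ T₄ h, b)]) ∧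
      rankA (G2 T₁ T₂ T₃ T₄) (h ++ [(agStrat T₁ T₂ T₃ T₄ h, b)])
        < rankA (G2 T₁ T₂ T₃ T₄) h := by
  intro b
  rw [agStrat, dif_neg h1, dif_neg hR, dif_neg h3, dif_pos hW]
  exact (mem_AReach_succ hW (fun hg => hg.elim h1 h3)).choose_spec b

theorem agStrat_spec5 {h : List (A × B)} (hW : ¬ W2 T₁ T₂ T₃ T₄ h)
    (hY : ¬ Y3 T₁ T₂ T₃ T₄ h) :
    ∀ b, ¬ Y3 T₁ T₂ T₃ T₄ (h ++ [(agStrat T₁ T₂ T₃ T₄ h, b)]) := by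
  have h1 : ¬ hits T₁ h := fun hh => hW ⟨0, Or.inl hh⟩
  have h3 : ¬ (hits T₃ h ∧ ¬ Ya T₁ T₂ T₄ h) := fun hh => hW ⟨0, Or.inr hh⟩
  have hR : ¬ R1 T₁ h := fun hh => hW (R1_subset_W2 T₁ T₂ T₃ T₄ hh)
  rw [agStrat, dif_neg h1, dif_neg hR, dif_neg h3, dif_neg hW, dif_pos hY]
  exact (not_EReach hY hW).2.choose_spec

/-! ### the environment strategy -/

noncomputable def envStrat : List (A × B) → A → B := fun h a =>
  if h3 : hits T₃ h then
    if hY : Ya T₁ T₂ T₄ h then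
      if hbase : ¬ keeps T₂ h ∧ ¬ keeps T₄ h then
        ((not_AReach (EReach_C hY)).2 a).choose
      else ((mem_EReach_succ hY hbase).2 a).choose
    else Classical.arbitrary B
  else
    if hY : Y3 T₁ T₂ T₃ T₄ h then
      if hbase : ¬ keeps T₂ h then
        ((not_AReach (EReach_C hY)).2 a).choose
      else ((mem_EReach_succ hY (fun hg => hbase hg)).2 a).choose
    else Classical.arbitrary B

theorem envStrat_specYbase {h : List (A × B)} (h3 : hits T₃ h) (hY : Ya T₁ T₂ T₄ h)
    (hbase : ¬ keeps T₂ h ∧ ¬ keeps T₄ h) (a : A) :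
    ¬ R1 T₁ (h ++ [(a, envStrat T₁ T₂ T₃ T₄ h a)]) := by
  rw [envStrat, dif_pos h3, dif_pos hY, dif_pos hbase]
  exact ((not_AReach (EReach_C hY)).2 a).choose_spec

theorem envStrat_specYstep {h : List (A × B)} (h3 : hits T₃ h) (hY : Ya T₁ T₂ T₄ h)
    (hbase : ¬ (¬ keeps T₂ h ∧ ¬ keeps T₄ h)) (a : A) :
    Ya T₁ T₂ T₄ (h ++ [(a, envStrat T₁ T₂ T₃ T₄ h a)]) ∧
      rankE (fun h => ¬ R1 T₁ h) (fun h => ¬ keeps T₂ h ∧ ¬ keeps T₄ h)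
          (h ++ [(a, envStrat T₁ T₂ T₃ T₄ h a)])
        < rankE (fun h => ¬ R1 T₁ h) (fun h => ¬ keeps T₂ h ∧ ¬ keeps T₄ h) h := by
  rw [envStrat, dif_pos h3, dif_pos hY, dif_neg hbase]
  exact ((mem_EReach_succ hY hbase).2 a).choose_spec

theorem envStrat_spec3base {h : List (A × B)} (h3 : ¬ hits T₃ h) (hY : Y3 T₁ T₂ T₃ T₄ h)
    (hbase : ¬ keeps T₂ h) (a : A) :
    ¬ W2 T₁ T₂ T₃ T₄ (h ++ [(a, envStrat T₁ T₂ T₃ T₄ h a)]) := by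
  rw [envStrat, dif_neg h3, dif_pos hY, dif_pos hbase]
  exact ((not_AReach (EReach_C hY)).2 a).choose_spec

theorem envStrat_spec3step {h : List (A × B)} (h3 : ¬ hits T₃ h) (hY : Y3 T₁ T₂ T₃ T₄ h)
    (hk2 : keeps T₂ h) (a : A) :
    Y3 T₁ T₂ T₃ T₄ (h ++ [(a, envStrat T₁ T₂ T₃ T₄ h a)]) ∧
      rankE (fun h => ¬ W2 T₁ T₂ T₃ T₄ h) (fun h => ¬ keeps T₂ h)
          (h ++ [(a, envStrat T₁ T₂ T₃ T₄ h a)])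
        < rankE (fun h => ¬ W2 T₁ T₂ T₃ T₄ h) (fun h => ¬ keeps T₂ h) h := by
  have hbase : ¬ ¬ keeps T₂ h := fun hg => hg hk2
  rw [envStrat, dif_neg h3, dif_pos hY, dif_neg hbase]
  exact ((mem_EReach_succ hY (fun hg => hbase hg)).2 a).choose_spec

end CRS
namespace CRS
open Classical
set_option linter.unusedSectionVars false
set_option linter.unusedVariables false

variable {A B : Type} [Fintype A] [Fintype B] [Nonempty A] [Nonempty B]
variable (T₁ T₂ T₃ T₄ : Set (List (A × B)))

theorem agent_main (hY0 : ¬ Y3 T₁ T₂ T₃ T₄ ([] : List (A × B))) :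
    AgentEnforces (agentOf (agStrat T₁ T₂ T₃ T₄))
      (Reach T₁ ∪ Safe T₂ ∪ (Reach T₃ ∩ Safe T₄)) := by
  intro σenv
  set τ := agStrat T₁ T₂ T₃ T₄ with hτ
  set π := play (agentOf τ) σenv with hπ
  set f : ℕ → List (A × B) := fun k => playPrefix (agentOf τ) σenv k with hf
  have hpre : ∀ k, pre π k = f k := fun k => pre_play _ _ k
  have hstep : ∀ k, ∃ b, f (k+1) = f k ++ [(τ (f k), b)] := fun k => agent_step τ σenv k
  have hf0 : f 0 = [] := rfl
  have hitsmono : ∀ (T : Set (List (A × B))) {j k : ℕ}, j ≤ k →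
      hits T (f j) → hits T (f k) := by
    intro T j k hjk hj
    rw [← hpre] at hj ⊢
    rw [hits_pre] at hj ⊢
    obtain ⟨m, h1, h2, h3⟩ := hj
    exact ⟨m, h1, le_trans h2 hjk, h3⟩
  have keepsmono : ∀ (T : Set (List (A × B))) {j k : ℕ}, j ≤ k →
      keeps T (f k) → keeps T (f j) := by
    intro T j k hjk hj
    rw [← hpre] at hj ⊢
    rw [keeps_pre] at hj ⊢
    exact fun m h1 h2 => hj m h1 (le_trans h2 hjk)
  by_cases hH1 : ∃ k, hits T₁ (f k)
  · -- the play reaches `T₁`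
    obtain ⟨k, hk⟩ := hH1
    exact Or.inl (Or.inl (reach_iff.2 ⟨k, by rw [hpre]; exact hk⟩))
  push_neg at hH1
  -- the play never enters the `R1` attractor
  have hR1 : ∀ k, ¬ R1 T₁ (f k) := by
    have key : ∀ n k, R1 T₁ (f k) → rankA (hits T₁) (f k) < n → False := by
      intro n
      induction n with
      | zero => omega
      | succ n ih =>
        intro k hk hrk
        obtain ⟨b, hb⟩ := hstep k
        have hs := agStrat_spec2 T₁ T₂ T₃ T₄ (hH1 k) hk b
        rw [← hτ, ← hb] at hs
        exact ih (k+1) hs.1 (by omega)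
    exact fun k hk => key (rankA (hits T₁) (f k) + 1) k hk (by omega)
  by_cases hM3 : ∃ k, hits T₃ (f k) ∧ ¬ Ya T₁ T₂ T₄ (f k)
  · obtain ⟨k, hk3, hkY⟩ := hM3
    -- mode 3 persists forever
    have persist : ∀ j, hits T₃ (f (k + j)) ∧ ¬ Ya T₁ T₂ T₄ (f (k + j)) := by
      intro j
      induction j with
      | zero => exact ⟨hk3, hkY⟩
      | succ j ih =>
        obtain ⟨b, hb⟩ := hstep (k + j)
        have hs := agStrat_spec3 T₁ T₂ T₃ T₄ (hH1 (k+j)) (hR1 (k+j)) ih b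
        rw [← hτ, ← hb] at hs
        have : k + (j+1) = (k + j) + 1 := by omega
        rw [this]
        exact ⟨hitsmono T₃ (Nat.le_succ _) ih.1, hs⟩
    have hsk : ∀ j, keeps T₂ (f (k + j)) ∨ keeps T₄ (f (k + j)) := by
      intro j
      have h := (not_EReach (persist j).2 (hR1 (k+j))).1
      by_contra hc
      push_neg at hc
      exact h ⟨hc.1, hc.2⟩
    by_cases hS2 : ∀ j, keeps T₂ (f j)
    · exact Or.inl (Or.inr (safe_iff.2 fun m => by rw [hpre]; exact hS2 m))
    · push_neg at hS2
      obtain ⟨j₀, hj₀⟩ := hS2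
      refine Or.inr ⟨reach_iff.2 ⟨k, by rw [hpre]; exact hk3⟩, safe_iff.2 fun m => ?_⟩
      rw [hpre]
      have hk4 : keeps T₄ (f (k + (j₀ + m))) := by
        rcases hsk (j₀ + m) with h2 | h4
        · exact absurd (keepsmono T₂ (by omega) h2) hj₀
        · exact h4
      exact keepsmono T₄ (by omega) hk4
  · -- never in mode 3: the play never enters the `W2` attractor
    push_neg at hM3
    have hM3' : ∀ k, ¬ (hits T₃ (f k) ∧ ¬ Ya T₁ T₂ T₄ (f k)) := by
      intro k hc
      exact hc.2 (hM3 k hc.1)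
    have hW2 : ∀ k, ¬ W2 T₁ T₂ T₃ T₄ (f k) := by
      have key : ∀ n k, W2 T₁ T₂ T₃ T₄ (f k) → rankA (G2 T₁ T₂ T₃ T₄) (f k) < n → False := by
        intro n
        induction n with
        | zero => omega
        | succ n ih =>
          intro k hk hrk
          obtain ⟨b, hb⟩ := hstep k
          have hs := agStrat_spec4 T₁ T₂ T₃ T₄ (hH1 k) (hR1 k) (hM3' k) hk b
          rw [← hτ, ← hb] at hs
          exact ih (k+1) hs.1 (by omega)
      exact fun k hk => key (rankA (G2 T₁ T₂ T₃ T₄) (f k) + 1) k hk (by omega)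
    have hY3 : ∀ k, ¬ Y3 T₁ T₂ T₃ T₄ (f k) := by
      intro k
      induction k with
      | zero => rw [hf0]; exact hY0
      | succ k ih =>
        obtain ⟨b, hb⟩ := hstep k
        have hs := agStrat_spec5 T₁ T₂ T₃ T₄ (hW2 k) ih b
        rw [← hτ, ← hb] at hs
        exact hs
    have hK2 : ∀ k, keeps T₂ (f k) := by
      intro k
      have := (not_EReach (hY3 k) (hW2 k)).1
      exact not_not.1 this
    exact Or.inl (Or.inr (safe_iff.2 fun m => by rw [hpre]; exact hK2 m))

end CRS
namespace CRS
open Classical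
set_option linter.unusedSectionVars false
set_option linter.unusedVariables false

variable {A B : Type} [Fintype A] [Fintype B] [Nonempty A] [Nonempty B]
variable (T₁ T₂ T₃ T₄ : Set (List (A × B)))

theorem env_main (hY0 : Y3 T₁ T₂ T₃ T₄ ([] : List (A × B))) :
    EnvEnforces (envOf (envStrat T₁ T₂ T₃ T₄))
      (Reach T₁ ∪ Safe T₂ ∪ (Reach T₃ ∩ Safe T₄))ᶜ := by
  intro σag
  set υ := envStrat T₁ T₂ T₃ T₄ with hυ
  set π := play σag (envOf υ) with hπ
  set f : ℕ → List (A × B) := fun k => playPrefix σag (envOf υ) k with hf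
  have hpre : ∀ k, pre π k = f k := fun k => pre_play _ _ k
  have hstep : ∀ k, ∃ a, f (k+1) = f k ++ [(a, υ (f k) a)] := fun k => env_step υ σag k
  have hf0 : f 0 = [] := rfl
  have hitsmono : ∀ (T : Set (List (A × B))) {j k : ℕ}, j ≤ k →
      hits T (f j) → hits T (f k) := by
    intro T j k hjk hj
    rw [← hpre] at hj ⊢
    rw [hits_pre] at hj ⊢
    obtain ⟨m, h1, h2, h3⟩ := hj
    exact ⟨m, h1, le_trans h2 hjk, h3⟩
  have keepsmono : ∀ (T : Set (List (A × B))) {j k : ℕ}, j ≤ k →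
      keeps T (f k) → keeps T (f j) := by
    intro T j k hjk hj
    rw [← hpre] at hj ⊢
    rw [keeps_pre] at hj ⊢
    exact fun m h1 h2 => hj m h1 (le_trans h2 hjk)
  -- the invariant maintained by the environment strategy
  have inv : ∀ k, (hits T₃ (f k) → Ya T₁ T₂ T₄ (f k)) ∧
      (¬ hits T₃ (f k) → Y3 T₁ T₂ T₃ T₄ (f k)) := by
    intro k
    induction k with
    | zero =>
      rw [hf0]
      exact ⟨fun h3 => absurd h3 (hits_nil T₃), fun _ => hY0⟩
    | succ k ih =>
      obtain ⟨a, ha⟩ := hstep k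
      by_cases h3 : hits T₃ (f k)
      · have hYa := ih.1 h3
        have hsucc3 : hits T₃ (f (k+1)) := hitsmono T₃ (Nat.le_succ k) h3
        by_cases hbase : ¬ keeps T₂ (f k) ∧ ¬ keeps T₄ (f k)
        · have hs := envStrat_specYbase T₁ T₂ T₃ T₄ h3 hYa hbase a
          rw [← hυ, ← ha] at hs
          have hk2 : ¬ keeps T₂ (f (k+1)) := fun hc => hbase.1 (keepsmono T₂ (Nat.le_succ k) hc)
          have hk4 : ¬ keeps T₄ (f (k+1)) := fun hc => hbase.2 (keepsmono T₄ (Nat.le_succ k) hc)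
          have hYs : Ya T₁ T₂ T₄ (f (k+1)) := ⟨0, hs, hk2, hk4⟩
          exact ⟨fun _ => hYs, fun hc => absurd hsucc3 hc⟩
        · have hs := envStrat_specYstep T₁ T₂ T₃ T₄ h3 hYa hbase a
          rw [← hυ, ← ha] at hs
          exact ⟨fun _ => hs.1, fun hc => absurd hsucc3 hc⟩
      · have hY3 := ih.2 h3
        have handle : ¬ W2 T₁ T₂ T₃ T₄ (f (k+1)) → ¬ keeps T₂ (f (k+1)) →
            (hits T₃ (f (k+1)) → Ya T₁ T₂ T₄ (f (k+1))) ∧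
            (¬ hits T₃ (f (k+1)) → Y3 T₁ T₂ T₃ T₄ (f (k+1))) := by
          intro hW hk2
          constructor
          · intro h3'
            have hG2 : ¬ G2 T₁ T₂ T₃ T₄ (f (k+1)) := fun hg => hW ⟨0, hg⟩
            by_contra hYc
            exact hG2 (Or.inr ⟨h3', hYc⟩)
          · intro _
            exact ⟨0, hW, hk2⟩
        by_cases hbase : ¬ keeps T₂ (f k)
        · have hs := envStrat_spec3base T₁ T₂ T₃ T₄ h3 hY3 hbase a
          rw [← hυ, ← ha] at hs
          have hk2 : ¬ keeps T₂ (f (k+1)) := fun hc => hbase (keepsmono T₂ (Nat.le_succ k) hc)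
          exact handle hs hk2
        · have hk2 : keeps T₂ (f k) := not_not.1 hbase
          have hs := envStrat_spec3step T₁ T₂ T₃ T₄ h3 hY3 hk2 a
          rw [← hυ, ← ha] at hs
          have hW : ¬ W2 T₁ T₂ T₃ T₄ (f (k+1)) := EReach_C hs.1
          constructor
          · intro h3'
            have hG2 : ¬ G2 T₁ T₂ T₃ T₄ (f (k+1)) := fun hg => hW ⟨0, hg⟩
            by_contra hYc
            exact hG2 (Or.inr ⟨h3', hYc⟩)
          · intro _
            exact hs.1
  -- (1) the play never hits T₁
  have noT1 : ∀ k, ¬ hits T₁ (f k) := by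
    intro k hk
    by_cases h3 : hits T₃ (f k)
    · have hYa := (inv k).1 h3
      have : ¬ R1 T₁ (f k) := EReach_C hYa
      exact this ⟨0, hk⟩
    · have hY3 := (inv k).2 h3
      have : ¬ W2 T₁ T₂ T₃ T₄ (f k) := EReach_C hY3
      exact this ⟨0, Or.inl hk⟩
  -- (2) the play eventually breaks T₂-safety
  have breakT2 : ∃ k, ¬ keeps T₂ (f k) := by
    by_contra hc
    push_neg at hc
    by_cases h3e : ∃ k, hits T₃ (f k)
    · obtain ⟨k₁, hk₁⟩ := h3e
      have key : ∀ n j, k₁ ≤ j →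
          rankE (fun h => ¬ R1 T₁ h) (fun h => ¬ keeps T₂ h ∧ ¬ keeps T₄ h) (f j) < n →
          False := by
        intro n
        induction n with
        | zero => omega
        | succ n ih =>
          intro j hj hrk
          have h3j : hits T₃ (f j) := hitsmono T₃ hj hk₁
          have hYa := (inv j).1 h3j
          have hnb : ¬ (¬ keeps T₂ (f j) ∧ ¬ keeps T₄ (f j)) := fun hcc => hcc.1 (hc j)
          obtain ⟨a, ha⟩ := hstep j
          have hs := envStrat_specYstep T₁ T₂ T₃ T₄ h3j hYa hnb a
          rw [← hυ, ← ha] at hs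
          exact ih (j+1) (by omega) (by omega)
      exact key (rankE (fun h => ¬ R1 T₁ h) (fun h => ¬ keeps T₂ h ∧ ¬ keeps T₄ h) (f k₁) + 1) k₁ (le_refl _) (by omega)
    · push_neg at h3e
      have key : ∀ n j,
          rankE (fun h => ¬ W2 T₁ T₂ T₃ T₄ h) (fun h => ¬ keeps T₂ h) (f j) < n →
          False := by
        intro n
        induction n with
        | zero => omega
        | succ n ih =>
          intro j hrk
          have hY3 := (inv j).2 (h3e j)
          obtain ⟨a, ha⟩ := hstep j
          have hs := envStrat_spec3step T₁ T₂ T₃ T₄ (h3e j) hY3 (hc j) a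
          rw [← hυ, ← ha] at hs
          exact ih (j+1) (by omega)
      exact key (rankE (fun h => ¬ W2 T₁ T₂ T₃ T₄ h) (fun h => ¬ keeps T₂ h) (f 0) + 1) 0 (by omega)
  -- (3) either T₃ is never hit, or T₄-safety is eventually broken
  have T3T4 : (∀ k, ¬ hits T₃ (f k)) ∨ (∃ k, ¬ keeps T₄ (f k)) := by
    by_cases h3e : ∃ k, hits T₃ (f k)
    · right
      by_contra hc
      push_neg at hc
      obtain ⟨k₁, hk₁⟩ := h3e
      have key : ∀ n j, k₁ ≤ j →
          rankE (fun h => ¬ R1 T₁ h) (fun h => ¬ keeps T₂ h ∧ ¬ keeps T₄ h) (f j) < n →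
          False := by
        intro n
        induction n with
        | zero => omega
        | succ n ih =>
          intro j hj hrk
          have h3j : hits T₃ (f j) := hitsmono T₃ hj hk₁
          have hYa := (inv j).1 h3j
          have hnb : ¬ (¬ keeps T₂ (f j) ∧ ¬ keeps T₄ (f j)) := fun hcc => hcc.2 (hc j)
          obtain ⟨a, ha⟩ := hstep j
          have hs := envStrat_specYstep T₁ T₂ T₃ T₄ h3j hYa hnb a
          rw [← hυ, ← ha] at hs
          exact ih (j+1) (by omega) (by omega)
      exact key (rankE (fun h => ¬ R1 T₁ h) (fun h => ¬ keeps T₂ h ∧ ¬ keeps T₄ h) (f k₁) + 1) k₁ (le_refl _) (by omega)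
    · push_neg at h3e
      exact Or.inl h3e
  -- conclude
  intro hmem
  rcases hmem with (hr1 | hs2) | ⟨hr3, hs4⟩
  · obtain ⟨m, hm⟩ := reach_iff.1 hr1
    rw [hpre] at hm
    exact noT1 m hm
  · obtain ⟨k, hk⟩ := breakT2
    have := safe_iff.1 hs2 k
    rw [hpre] at this
    exact hk this
  · obtain ⟨m, hm⟩ := reach_iff.1 hr3
    rw [hpre] at hm
    rcases T3T4 with hnever | ⟨k, hk⟩
    · exact hnever m hm
    · have := safe_iff.1 hs4 k
      rw [hpre] at this
      exact hk this

end CRS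
/-- Determinacy of the combined reachability/safety games: for
`P = Reach T₁ ∪ Safe T₂ ∪ (Reach T₃ ∩ Safe T₄)`, exactly one of the following
holds: (i) some agent strategy enforces `P`; (ii) some environment strategy
enforces the complement of `P`. -/
theorem combined_reach_safe_determinacy {A B : Type}
    [Fintype A] [Fintype B] [Nonempty A] [Nonempty B]
    (T₁ T₂ T₃ T₄ : Set (List (A × B))) :
    Xor' (∃ σag : List B → A,
        AgentEnforces σag (Reach T₁ ∪ Safe T₂ ∪ (Reach T₃ ∩ Safe T₄)))
      (∃ σenv : List A → B,
        EnvEnforces σenv (Reach T₁ ∪ Safe T₂ ∪ (Reach T₃ ∩ Safe T₄))ᶜ) := by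

  classical
  by_cases hc : CRS.Y3 T₁ T₂ T₃ T₄ ([] : List (A × B))
  · refine Or.inr ⟨⟨CRS.envOf (CRS.envStrat T₁ T₂ T₃ T₄), CRS.env_main T₁ T₂ T₃ T₄ hc⟩, ?_⟩
    rintro ⟨σag, hag⟩
    exact CRS.env_main T₁ T₂ T₃ T₄ hc σag (hag (CRS.envOf (CRS.envStrat T₁ T₂ T₃ T₄)))
  · refine Or.inl ⟨⟨CRS.agentOf (CRS.agStrat T₁ T₂ T₃ T₄), CRS.agent_main T₁ T₂ T₃ T₄ hc⟩, ?_⟩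
    rintro ⟨σenv, henv⟩
    exact henv (CRS.agentOf (CRS.agStrat T₁ T₂ T₃ T₄)) (CRS.agent_main T₁ T₂ T₃ T₄ hc σenv)
end

section
/- Equivalence of synthesis under environment specifications and implication synthesis for reachability/safety specifications: for all sets E₁, E₂, T₁, T₂ of nonempty finite words over A × B, letting Env := Reach E₁ ∩ Safe E₂ and Task := Reach T₁ ∩ Safe T₂, the following are equivalent: (i) there exists an agent strategy enforcing Task under Env; (ii) there exists an agent strategy enforcing Envᶜ ∪ Task. -/
namespace RSdet
set_option linter.unusedSectionVars false

open Classical List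

noncomputable section

variable {A B : Type}

abbrev H (A B : Type) : Type := List (A × B)

variable [Nonempty A] [Nonempty B]

/-- extension of a history by history-based strategies -/
def ext (τa : H A B → A) (τe : H A B → A → B) (h : H A B) : ℕ → H A B
  | 0 => h
  | k+1 =>
      let g := ext τa τe h k
      let a := τa g
      g ++ [(a, τe g a)]

/-- the infinite play extending `h` -/
def πF (τa : H A B → A) (τe : H A B → A → B) (h : H A B) (n : ℕ) : A × B :=
  (ext τa τe h (n+1)).getD n (Classical.arbitrary _)

variable {τa : H A B → A} {τe : H A B → A → B} {h : H A B}

@[simp] lemma ext_zero : ext τa τe h 0 = h := rfl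

lemma ext_succ (k : ℕ) :
    ext τa τe h (k+1) = ext τa τe h k ++
      [(τa (ext τa τe h k), τe (ext τa τe h k) (τa (ext τa τe h k)))] := rfl

@[simp] lemma ext_length (k : ℕ) : (ext τa τe h k).length = h.length + k := by
  induction k with
  | zero => rfl
  | succ k ih => simp [ext_succ, ih]; omega

lemma ext_prefix_succ (k : ℕ) : ext τa τe h k <+: ext τa τe h (k+1) := by
  rw [ext_succ]; exact prefix_append _ _

lemma ext_prefix {k k' : ℕ} (hk : k ≤ k') : ext τa τe h k <+: ext τa τe h k' := by
  induction k' with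
  | zero => simp_all
  | succ k' ih =>
    rcases Nat.eq_or_lt_of_le hk with rfl | hlt
    · exact prefix_rfl
    · exact (ih (by omega)).trans (ext_prefix_succ k')

lemma prefix_ext (k : ℕ) : h <+: ext τa τe h k := ext_prefix (Nat.zero_le k)

lemma ext_shift (k : ℕ) :
    ext τa τe h (k+1) = ext τa τe (ext τa τe h 1) k := by
  induction k with
  | zero => rfl
  | succ k ih => rw [ext_succ, ih, ← ext_succ]

lemma ext_take {k j : ℕ} (hj : j ≤ k) :
    (ext τa τe h k).take (h.length + j) = ext τa τe h j := by
  have hpre := ext_prefix (τa := τa) (τe := τe) (h := h) hj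
  have := (prefix_iff_eq_take.mp hpre)
  rw [ext_length] at this
  exact this.symm

lemma πF_eq_getElem {k n : ℕ} (hn : n < h.length + k) :
    πF τa τe h n = (ext τa τe h k).getD n (Classical.arbitrary _) := by
  unfold πF
  rcases le_total (n+1) k with hle | hle
  · have hpre := ext_prefix (τa := τa) (τe := τe) (h := h) hle
    rw [List.getD_eq_getElem _ _ (by simp; omega), List.getD_eq_getElem _ _ (by simp; omega)]
    exact hpre.getElem (by simp; omega)
  · have hpre := ext_prefix (τa := τa) (τe := τe) (h := h) hle
    rw [List.getD_eq_getElem _ _ (by simp; omega), List.getD_eq_getElem _ _ (by simp; omega)]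
    exact (hpre.getElem (by simp; omega)).symm

lemma pre_take {α : Type} (π : ℕ → α) {n m : ℕ} (hnm : n ≤ m) :
    (pre π m).take n = pre π n := by
  unfold pre
  rw [← List.map_take, take_range, Nat.min_eq_left hnm]

@[simp] lemma pre_length {α : Type} (π : ℕ → α) (n : ℕ) : (pre π n).length = n := by
  simp [pre]

lemma pre_πF_add (k : ℕ) : pre (πF τa τe h) (h.length + k) = ext τa τe h k := by
  apply List.ext_getElem (by simp)
  intro n hn1 hn2
  have hn : n < h.length + k := by simpa using hn2
  simp only [pre, List.getElem_map, List.getElem_range]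
  rw [πF_eq_getElem hn, List.getD_eq_getElem _ _ (by simp; omega)]

lemma pre_πF_le {n : ℕ} (hn : n ≤ h.length) : pre (πF τa τe h) n = h.take n := by
  have h0 := pre_πF_add (τa := τa) (τe := τe) (h := h) 0
  simp only [Nat.add_zero, ext_zero] at h0
  rw [← pre_take (πF τa τe h) (m := h.length) hn, h0]

lemma pre_πF_prefix_or (n : ℕ) :
    ∃ k, pre (πF τa τe h) n <+: ext τa τe h k := by
  rcases le_total n h.length with hle | hle
  · exact ⟨0, by rw [pre_πF_le hle]; exact take_prefix _ _⟩
  · obtain ⟨k, rfl⟩ := Nat.exists_eq_add_of_le hle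
    exact ⟨k, by rw [pre_πF_add]⟩


/-! ### A stabilization lemma for antitone families over a fintype -/

lemma antitone_exists {α : Type} [Fintype α] (S : ℕ → α → Prop)
    (hS : ∀ n x, S (n+1) x → S n x) (hne : ∀ n, ∃ x, S n x) :
    ∃ x, ∀ n, S n x := by
  classical
  let T : ℕ → Finset α := fun n => Finset.univ.filter (fun x => S n x)
  have hmem : ∀ n x, x ∈ T n ↔ S n x := by intro n x; simp [T]
  have hsub : ∀ {n m : ℕ}, n ≤ m → T m ⊆ T n := by
    intro n m hnm
    induction hnm with
    | refl => exact fun x hx => hx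
    | step _ ih => exact fun x hx => ih ((hmem _ x).mpr (hS _ x ((hmem _ x).mp hx)))
  have hTne : ∀ n, (T n).Nonempty := fun n => by
    obtain ⟨x, hx⟩ := hne n; exact ⟨x, (hmem n x).mpr hx⟩
  obtain ⟨N, hN⟩ : ∃ N, (T N).card = sInf (Set.range fun n => (T n).card) := by
    obtain ⟨N, hN⟩ := Nat.sInf_mem (⟨(T 0).card, 0, rfl⟩ : (Set.range fun n => (T n).card).Nonempty)
    exact ⟨N, hN⟩
  have hconst : ∀ m, N ≤ m → T m = T N := by
    intro m hm
    refine Finset.eq_of_subset_of_card_le (hsub hm) ?_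
    rw [hN]
    exact Nat.sInf_le ⟨m, rfl⟩
  obtain ⟨x, hx⟩ := hTne N
  refine ⟨x, fun n => ?_⟩
  rcases le_total n N with hnN | hNn
  · exact (hmem n x).mp (hsub hnN hx)
  · exact (hmem n x).mp ((hconst n hNn) ▸ hx)

/-! ### Attractors -/

section Attr

/-- agent attractor approximants -/
def AtrA (U : Set (H A B)) : ℕ → Set (H A B)
  | 0 => U
  | n+1 => U ∪ {g | ∃ a, ∀ b, g ++ [(a, b)] ∈ AtrA U n}

def AttrA (U : Set (H A B)) : Set (H A B) := ⋃ n, AtrA U n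

/-- environment attractor approximants -/
def AtrE (U : Set (H A B)) : ℕ → Set (H A B)
  | 0 => U
  | n+1 => U ∪ {g | ∀ a, ∃ b, g ++ [(a, b)] ∈ AtrE U n}

def AttrE (U : Set (H A B)) : Set (H A B) := ⋃ n, AtrE U n

variable {U : Set (H A B)}

lemma atrA_mono_succ (n : ℕ) : AtrA U n ⊆ AtrA U (n+1) := by
  induction n with
  | zero => exact Set.subset_union_left
  | succ n ih =>
    rintro g (hg | ⟨a, ha⟩)
    · exact Or.inl hg
    · exact Or.inr ⟨a, fun b => ih (ha b)⟩

lemma atrA_mono {n m : ℕ} (hnm : n ≤ m) : AtrA U n ⊆ AtrA U m := by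
  induction hnm with
  | refl => exact fun _ hx => hx
  | step _ ih => exact fun x hx => atrA_mono_succ _ (ih hx)

lemma atrE_mono_succ (n : ℕ) : AtrE U n ⊆ AtrE U (n+1) := by
  induction n with
  | zero => exact Set.subset_union_left
  | succ n ih =>
    rintro g (hg | ha)
    · exact Or.inl hg
    · exact Or.inr fun a => ⟨(ha a).choose, ih (ha a).choose_spec⟩

lemma atrE_mono {n m : ℕ} (hnm : n ≤ m) : AtrE U n ⊆ AtrE U m := by
  induction hnm with
  | refl => exact fun _ hx => hx
  | step _ ih => exact fun x hx => atrE_mono_succ _ (ih hx)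

lemma subset_attrA : U ⊆ AttrA U := fun g hg => Set.mem_iUnion.mpr ⟨0, hg⟩
lemma subset_attrE : U ⊆ AttrE U := fun g hg => Set.mem_iUnion.mpr ⟨0, hg⟩

/-- rank of a history in the agent attractor -/
def rkA (U : Set (H A B)) (g : H A B) : ℕ := sInf {n | g ∈ AtrA U n}
def rkE (U : Set (H A B)) (g : H A B) : ℕ := sInf {n | g ∈ AtrE U n}

/-- agent reaching strategy -/
def stratA (U : Set (H A B)) : H A B → A := fun g =>
  if hg : ∃ a, ∀ b, g ++ [(a, b)] ∈ AtrA U (rkA U g - 1) then Classical.choose hg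
  else Classical.arbitrary A

/-- environment reaching strategy -/
def stratE (U : Set (H A B)) : H A B → A → B := fun g a =>
  if hg : ∃ b, g ++ [(a, b)] ∈ AtrE U (rkE U g - 1) then Classical.choose hg
  else Classical.arbitrary B

/-- key step for agent reach -/
lemma stratA_step {g : H A B} (hg : g ∈ AttrA U) (hgU : g ∉ U) (b : B) :
    g ++ [(stratA U g, b)] ∈ AttrA U ∧ rkA U (g ++ [(stratA U g, b)]) < rkA U g := by
  have hne : {n | g ∈ AtrA U n}.Nonempty := Set.mem_iUnion.mp hg
  have hmem : g ∈ AtrA U (rkA U g) := Nat.sInf_mem hne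
  have hr0 : rkA U g ≠ 0 := by
    intro h0; rw [h0] at hmem; exact hgU hmem
  obtain ⟨m, hm⟩ := Nat.exists_eq_succ_of_ne_zero hr0
  rw [hm] at hmem
  rcases hmem with hU | ⟨a, ha⟩
  · exact absurd hU hgU
  · have hex : ∃ a, ∀ b, g ++ [(a, b)] ∈ AtrA U (rkA U g - 1) := ⟨a, by rw [hm]; exact ha⟩
    have hspec := Classical.choose_spec hex b
    refine ⟨Set.mem_iUnion.mpr ⟨_, by rw [stratA, dif_pos hex]; exact hspec⟩, ?_⟩
    calc rkA U (g ++ [(stratA U g, b)]) ≤ rkA U g - 1 :=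
          Nat.sInf_le (by rw [stratA, dif_pos hex]; exact hspec)
      _ < rkA U g := by omega

lemma stratE_step {g : H A B} (hg : g ∈ AttrE U) (hgU : g ∉ U) (a : A) :
    g ++ [(a, stratE U g a)] ∈ AttrE U ∧ rkE U (g ++ [(a, stratE U g a)]) < rkE U g := by
  have hne : {n | g ∈ AtrE U n}.Nonempty := Set.mem_iUnion.mp hg
  have hmem : g ∈ AtrE U (rkE U g) := Nat.sInf_mem hne
  have hr0 : rkE U g ≠ 0 := by
    intro h0; rw [h0] at hmem; exact hgU hmem
  obtain ⟨m, hm⟩ := Nat.exists_eq_succ_of_ne_zero hr0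
  rw [hm] at hmem
  rcases hmem with hU | ha
  · exact absurd hU hgU
  · obtain ⟨b, hb⟩ := ha a
    have hex : ∃ b, g ++ [(a, b)] ∈ AtrE U (rkE U g - 1) := ⟨b, by rw [hm]; exact hb⟩
    have hspec := Classical.choose_spec hex
    refine ⟨Set.mem_iUnion.mpr ⟨_, by rw [stratE, dif_pos hex]; exact hspec⟩, ?_⟩
    calc rkE U (g ++ [(a, stratE U g a)]) ≤ rkE U g - 1 :=
          Nat.sInf_le (by rw [stratE, dif_pos hex]; exact hspec)
      _ < rkE U g := by omega

/-- the agent reaching strategy reaches `U` from the attractor -/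
lemma stratA_reaches {g : H A B} (hg : g ∈ AttrA U) (τe : H A B → A → B) :
    ∃ k, ext (stratA U) τe g k ∈ U := by
  by_cases hgU : g ∈ U
  · exact ⟨0, hgU⟩
  · have hstep := stratA_step hg hgU (τe g (stratA U g))
    have h1 : ext (stratA U) τe g 1 = g ++ [(stratA U g, τe g (stratA U g))] := rfl
    have : ∃ k, ext (stratA U) τe (ext (stratA U) τe g 1) k ∈ U := by
      apply stratA_reaches (h1 ▸ hstep.1)
    obtain ⟨k, hk⟩ := this
    exact ⟨k + 1, by rw [ext_shift]; exact hk⟩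
termination_by rkA U g
decreasing_by
  have := stratA_step hg hgU (τe g (stratA U g))
  rw [h1]; exact this.2

lemma stratE_reaches {g : H A B} (hg : g ∈ AttrE U) (τa : H A B → A) :
    ∃ k, ext τa (stratE U) g k ∈ U := by
  by_cases hgU : g ∈ U
  · exact ⟨0, hgU⟩
  · have hstep := stratE_step hg hgU (τa g)
    have h1 : ext τa (stratE U) g 1 = g ++ [(τa g, stratE U g (τa g))] := rfl
    have : ∃ k, ext τa (stratE U) (ext τa (stratE U) g 1) k ∈ U := by
      apply stratE_reaches (h1 ▸ hstep.1)
    obtain ⟨k, hk⟩ := this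
    exact ⟨k + 1, by rw [ext_shift]; exact hk⟩
termination_by rkE U g
decreasing_by
  have := stratE_step hg hgU (τa g)
  rw [h1]; exact this.2

variable [Fintype A] [Fintype B]

/-- escaping the environment attractor: the agent can stay out -/
lemma escape_attrE {g : H A B} (hg : g ∉ AttrE U) :
    ∃ a, ∀ b, g ++ [(a, b)] ∉ AttrE U := by
  have hnot : ∀ n, g ∉ AtrE U n := fun n hn => hg (Set.mem_iUnion.mpr ⟨n, hn⟩)
  have hS : ∀ n, ∃ a, ∀ b, g ++ [(a, b)] ∉ AtrE U n := by
    intro n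
    have h2 : ¬ (g ∈ U ∨ ∀ a, ∃ b, g ++ [(a, b)] ∈ AtrE U n) := fun hc =>
      hnot (n+1) (by
        rcases hc with hc | hc
        · exact Set.mem_union_left _ hc
        · exact Set.mem_union_right _ hc)
    push_neg at h2
    exact h2.2
  obtain ⟨a, ha⟩ := antitone_exists (fun n a => ∀ b, g ++ [(a, b)] ∉ AtrE U n)
    (fun n a hsa b hb => hsa b (atrE_mono_succ n hb)) hS
  exact ⟨a, fun b hb => by
    obtain ⟨n, hn⟩ := Set.mem_iUnion.mp hb
    exact ha n b hn⟩

/-- escaping the agent attractor: the environment can stay out -/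
lemma escape_attrA {g : H A B} (hg : g ∉ AttrA U) (a : A) :
    ∃ b, g ++ [(a, b)] ∉ AttrA U := by
  have hnot : ∀ n, g ∉ AtrA U n := fun n hn => hg (Set.mem_iUnion.mpr ⟨n, hn⟩)
  have hS : ∀ n, ∃ b, g ++ [(a, b)] ∉ AtrA U n := by
    intro n
    have h2 : ¬ (g ∈ U ∨ ∃ a', ∀ b, g ++ [(a', b)] ∈ AtrA U n) := fun hc =>
      hnot (n+1) (by
        rcases hc with hc | hc
        · exact Set.mem_union_left _ hc
        · exact Set.mem_union_right _ hc)
    push_neg at h2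
    exact h2.2 a
  obtain ⟨b, hb⟩ := antitone_exists (fun n b => g ++ [(a, b)] ∉ AtrA U n)
    (fun n b hsb hb2 => hsb (atrA_mono_succ n hb2)) hS
  exact ⟨b, fun hb2 => by
    obtain ⟨n, hn⟩ := Set.mem_iUnion.mp hb2
    exact hb n hn⟩

/-- agent strategy staying out of the environment attractor -/
def avoidA (U : Set (H A B)) : H A B → A := fun g =>
  if hg : ∃ a, ∀ b, g ++ [(a, b)] ∉ AttrE U then Classical.choose hg
  else Classical.arbitrary A

def avoidE (U : Set (H A B)) : H A B → A → B := fun g a =>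
  if hg : ∃ b, g ++ [(a, b)] ∉ AttrA U then Classical.choose hg
  else Classical.arbitrary B

lemma avoidA_safe {h : H A B} (hh : h ∉ AttrE U) (τe : H A B → A → B) :
    ∀ k, ext (avoidA U) τe h k ∉ AttrE U := by
  intro k
  induction k with
  | zero => exact hh
  | succ k ih =>
    have hex := escape_attrE ih
    rw [ext_succ]
    have : avoidA U (ext (avoidA U) τe h k) = Classical.choose hex := by
      rw [avoidA, dif_pos hex]
    rw [this]
    exact Classical.choose_spec hex _

lemma avoidE_safe {h : H A B} (hh : h ∉ AttrA U) (τa : H A B → A) :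
    ∀ k, ext τa (avoidE U) h k ∉ AttrA U := by
  intro k
  induction k with
  | zero => exact hh
  | succ k ih =>
    have hex := escape_attrA ih (τa (ext τa (avoidE U) h k))
    rw [ext_succ]
    have : avoidE U (ext τa (avoidE U) h k) (τa (ext τa (avoidE U) h k)) =
        Classical.choose hex := by
      rw [avoidE, dif_pos hex]
    rw [this]
    exact Classical.choose_spec hex

end Attr


/-! ### Switching strategies at the first trigger -/

lemma getD_eq_of_prefix {α : Type} (d : α) {l1 l2 : List α} (hp : l1 <+: l2) {n : ℕ}
    (hn : n < l1.length) : l1.getD n d = l2.getD n d := by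
  rw [List.getD_eq_getElem _ _ hn,
    List.getD_eq_getElem _ _ (lt_of_lt_of_le hn hp.length_le)]
  exact hp.getElem hn

def TrgSet (Trig : Set (H A B)) (h0 : ℕ) (g : H A B) : Set ℕ :=
  {l | h0 < l ∧ l ≤ g.length ∧ g.take l ∈ Trig}

def trg (Trig : Set (H A B)) (h0 : ℕ) (g : H A B) : Prop := ∃ l, l ∈ TrgSet Trig h0 g

/-- agent strategy: play `τ0`, but switch to `t g` at the first trigger `g` -/
def swA (Trig : Set (H A B)) (h0 : ℕ) (τ0 : H A B → A) (t : H A B → H A B → A) :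
    H A B → A := fun g =>
  if trg Trig h0 g then t (g.take (sInf (TrgSet Trig h0 g))) g else τ0 g

def swE (Trig : Set (H A B)) (h0 : ℕ) (τe0 : H A B → A → B)
    (t : H A B → H A B → A → B) : H A B → A → B := fun g a =>
  if trg Trig h0 g then t (g.take (sInf (TrgSet Trig h0 g))) g a else τe0 g a

section Comp

variable {Trig : Set (H A B)}

lemma not_trg_of {τa : H A B → A} {τe : H A B → A → B} {h : H A B} {k : ℕ}
    (hyp : ∀ j ≤ k, ext τa τe h j ∉ Trig) : ¬ trg Trig h.length (ext τa τe h k) := by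
  rintro ⟨l, hl1, hl2, hl3⟩
  rw [ext_length] at hl2
  rw [show l = h.length + (l - h.length) by omega] at hl3
  rw [ext_take (by omega)] at hl3
  exact hyp _ (by omega) hl3

lemma fst_trigger {τa : H A B → A} {τe : H A B → A → B} {h : H A B}
    (Hlen : ∀ g ∈ Trig, h.length < g.length) {K : ℕ}
    (hKT : ext τa τe h K ∈ Trig) (hKmin : ∀ j < K, ext τa τe h j ∉ Trig)
    {w : H A B} (hw : ext τa τe h K <+: w) :
    trg Trig h.length w ∧ sInf (TrgSet Trig h.length w) = h.length + K ∧
      w.take (h.length + K) = ext τa τe h K := by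
  have hlenK : (ext τa τe h K).length = h.length + K := ext_length K
  have hK1 : h.length < h.length + K := by
    have := Hlen _ hKT; rwa [hlenK] at this
  have htake : w.take (h.length + K) = ext τa τe h K := by
    have := List.prefix_iff_eq_take.mp hw
    rw [hlenK] at this
    exact this.symm
  have hmem : h.length + K ∈ TrgSet Trig h.length w :=
    ⟨hK1, by rw [← hlenK]; exact hw.length_le, by rw [htake]; exact hKT⟩
  refine ⟨⟨_, hmem⟩, ?_, htake⟩
  refine Nat.le_antisymm (Nat.sInf_le hmem) (le_csInf ⟨_, hmem⟩ ?_)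
  rintro l ⟨hl1, hl2, hl3⟩
  by_contra hlt
  push_neg at hlt
  have h4 : w.take l = (ext τa τe h K).take l := by
    rw [← htake, List.take_take, Nat.min_eq_left (le_of_lt hlt)]
  have h5 : (ext τa τe h K).take l = ext τa τe h (l - h.length) := by
    nth_rewrite 1 [show l = h.length + (l - h.length) by omega]
    exact ext_take (by omega)
  rw [h4, h5] at hl3
  exact hKmin _ (by omega) hl3

/-- agreement before the first trigger, agent version -/
lemma swA_agree {τ0 : H A B → A} {t : H A B → H A B → A} {τe : H A B → A → B}
    {h : H A B} {k : ℕ} (hyp : ∀ j < k, ext τ0 τe h j ∉ Trig) :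
    ext (swA Trig h.length τ0 t) τe h k = ext τ0 τe h k := by
  induction k with
  | zero => rfl
  | succ k ih =>
    have he : ext (swA Trig h.length τ0 t) τe h k = ext τ0 τe h k :=
      ih fun j hj => hyp j (by omega)
    have hnt : ¬ trg Trig h.length (ext τ0 τe h k) :=
      not_trg_of fun j hj => hyp j (by omega)
    rw [ext_succ, ext_succ, he, swA, if_neg hnt]

lemma swE_agree {τa : H A B → A} {τe0 : H A B → A → B} {t : H A B → H A B → A → B}
    {h : H A B} {k : ℕ} (hyp : ∀ j < k, ext τa τe0 h j ∉ Trig) :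
    ext τa (swE Trig h.length τe0 t) h k = ext τa τe0 h k := by
  induction k with
  | zero => rfl
  | succ k ih =>
    have he : ext τa (swE Trig h.length τe0 t) h k = ext τa τe0 h k :=
      ih fun j hj => hyp j (by omega)
    have hnt : ¬ trg Trig h.length (ext τa τe0 h k) :=
      not_trg_of fun j hj => hyp j (by omega)
    rw [ext_succ, ext_succ, he, swE, if_neg hnt]

/-- composition, agent version -/
lemma comp_agent {h : H A B} (Hlen : ∀ g ∈ Trig, h.length < g.length)
    (τ0 : H A B → A) (t : H A B → H A B → A) (τe : H A B → A → B) :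
    ((∀ k, ext τ0 τe h k ∉ Trig) ∧
        πF (swA Trig h.length τ0 t) τe h = πF τ0 τe h) ∨
      (∃ K, ext τ0 τe h K ∈ Trig ∧ (∀ j < K, ext τ0 τe h j ∉ Trig) ∧
        πF (swA Trig h.length τ0 t) τe h =
          πF (t (ext τ0 τe h K)) τe (ext τ0 τe h K)) := by
  by_cases hT : ∃ k, ext τ0 τe h k ∈ Trig
  · right
    set S : Set ℕ := {k | ext τ0 τe h k ∈ Trig} with hS
    have hKT : ext τ0 τe h (sInf S) ∈ Trig := Nat.sInf_mem hT
    have hKmin : ∀ j < sInf S, ext τ0 τe h j ∉ Trig := fun j hj =>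
      Nat.notMem_of_lt_sInf hj
    set K := sInf S
    set g := ext τ0 τe h K with hg
    refine ⟨K, hKT, hKmin, ?_⟩
    have hagree : ∀ j ≤ K, ext (swA Trig h.length τ0 t) τe h j = ext τ0 τe h j :=
      fun j hj => swA_agree fun i hi => hKmin i (by omega)
    have hmain : ∀ m, ext (swA Trig h.length τ0 t) τe h (K + m) = ext (t g) τe g m := by
      intro m
      induction m with
      | zero => exact hagree K le_rfl
      | succ m ih =>
        have hfst := fst_trigger Hlen hKT hKmin (prefix_ext (τa := t g) (τe := τe) m)
        have hsw : swA Trig h.length τ0 t (ext (t g) τe g m) = t g (ext (t g) τe g m) := by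
          rw [swA, if_pos hfst.1, hfst.2.1, hfst.2.2]
        rw [show K + (m+1) = (K + m) + 1 by omega, ext_succ, ih, ext_succ, hsw]
    funext n
    have h1 : πF (swA Trig h.length τ0 t) τe h n =
        (ext (swA Trig h.length τ0 t) τe h (n+1)).getD n (Classical.arbitrary _) := rfl
    have h2 : πF (t g) τe g n =
        (ext (t g) τe g (n+1)).getD n (Classical.arbitrary _) := rfl
    rw [h1, h2, ← hmain (n+1)]
    exact getD_eq_of_prefix _ (ext_prefix (by omega)) (by rw [ext_length]; omega)
  · left
    push_neg at hT
    refine ⟨hT, ?_⟩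
    funext n
    have h1 : πF (swA Trig h.length τ0 t) τe h n =
        (ext (swA Trig h.length τ0 t) τe h (n+1)).getD n (Classical.arbitrary _) := rfl
    rw [h1, swA_agree fun j _ => hT j]
    rfl

/-- composition, environment version -/
lemma comp_env {h : H A B} (Hlen : ∀ g ∈ Trig, h.length < g.length)
    (τa : H A B → A) (τe0 : H A B → A → B) (t : H A B → H A B → A → B) :
    ((∀ k, ext τa τe0 h k ∉ Trig) ∧
        πF τa (swE Trig h.length τe0 t) h = πF τa τe0 h) ∨
      (∃ K, ext τa τe0 h K ∈ Trig ∧ (∀ j < K, ext τa τe0 h j ∉ Trig) ∧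
        πF τa (swE Trig h.length τe0 t) h =
          πF τa (t (ext τa τe0 h K)) (ext τa τe0 h K)) := by
  by_cases hT : ∃ k, ext τa τe0 h k ∈ Trig
  · right
    set S : Set ℕ := {k | ext τa τe0 h k ∈ Trig} with hS
    have hKT : ext τa τe0 h (sInf S) ∈ Trig := Nat.sInf_mem hT
    have hKmin : ∀ j < sInf S, ext τa τe0 h j ∉ Trig := fun j hj =>
      Nat.notMem_of_lt_sInf hj
    set K := sInf S
    set g := ext τa τe0 h K with hg
    refine ⟨K, hKT, hKmin, ?_⟩
    have hagree : ∀ j ≤ K, ext τa (swE Trig h.length τe0 t) h j = ext τa τe0 h j :=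
      fun j hj => swE_agree fun i hi => hKmin i (by omega)
    have hmain : ∀ m, ext τa (swE Trig h.length τe0 t) h (K + m) = ext τa (t g) g m := by
      intro m
      induction m with
      | zero => exact hagree K le_rfl
      | succ m ih =>
        have hfst := fst_trigger Hlen hKT hKmin (prefix_ext (τa := τa) (τe := t g) m)
        have hsw : ∀ x, swE Trig h.length τe0 t (ext τa (t g) g m) x =
            t g (ext τa (t g) g m) x := by
          intro x
          rw [swE, if_pos hfst.1, hfst.2.1, hfst.2.2]
        rw [show K + (m+1) = (K + m) + 1 by omega, ext_succ, ih, ext_succ, hsw]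
    funext n
    have h1 : πF τa (swE Trig h.length τe0 t) h n =
        (ext τa (swE Trig h.length τe0 t) h (n+1)).getD n (Classical.arbitrary _) := rfl
    have h2 : πF τa (t g) g n =
        (ext τa (t g) g (n+1)).getD n (Classical.arbitrary _) := rfl
    rw [h1, h2, ← hmain (n+1)]
    exact getD_eq_of_prefix _ (ext_prefix (by omega)) (by rw [ext_length]; omega)
  · left
    push_neg at hT
    refine ⟨hT, ?_⟩
    funext n
    have h1 : πF τa (swE Trig h.length τe0 t) h n =
        (ext τa (swE Trig h.length τe0 t) h (n+1)).getD n (Classical.arbitrary _) := rfl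
    rw [h1, swE_agree fun j _ => hT j]
    rfl

end Comp


/-! ### Determinacy for finite boolean combinations of reachability events -/

section Det

variable {ι : Type} [Fintype ι]

def Wset (P : ι → H A B → Prop) (φ : (ι → Prop) → Prop) : Set (ℕ → A × B) :=
  {π | φ (fun i => ∃ n, P i (pre π n))}

def AgWin (P : ι → H A B → Prop) (φ : (ι → Prop) → Prop) (h : H A B) : Prop :=
  ∃ τa, ∀ τe, πF τa τe h ∈ Wset P φ

def EnvWin (P : ι → H A B → Prop) (φ : (ι → Prop) → Prop) (h : H A B) : Prop :=
  ∃ τe, ∀ τa, πF τa τe h ∉ Wset P φ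

variable {P : ι → H A B → Prop} {φ : (ι → Prop) → Prop}

lemma mem_Wset_iff (Pmono : ∀ i ⦃g g'⦄, g <+: g' → P i g → P i g')
    {τa : H A B → A} {τe : H A B → A → B} {h : H A B} :
    πF τa τe h ∈ Wset P φ ↔ φ (fun i => ∃ k, P i (ext τa τe h k)) := by
  have heq : (fun i => ∃ n, P i (pre (πF τa τe h) n)) =
      fun i => ∃ k, P i (ext τa τe h k) := by
    funext i
    apply propext
    constructor
    · rintro ⟨n, hn⟩
      obtain ⟨k, hk⟩ := pre_πF_prefix_or (τa := τa) (τe := τe) (h := h) n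
      exact ⟨k, Pmono i hk hn⟩
    · rintro ⟨k, hk⟩
      exact ⟨h.length + k, by rw [pre_πF_add]; exact hk⟩
  show φ _ ↔ _
  rw [heq]

/-- number of events not yet triggered -/
noncomputable def mC (P : ι → H A B → Prop) (h : H A B) : ℕ :=
  (@Finset.filter ι (fun i => ¬ P i h) (Classical.decPred _) Finset.univ).card

lemma mC_lt (Pmono : ∀ i ⦃g g'⦄, g <+: g' → P i g → P i g') {h g : H A B}
    (hp : h <+: g) {i₀ : ι} (hni : ¬ P i₀ h) (hgi : P i₀ g) : mC P g < mC P h := by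
  classical
  apply Finset.card_lt_card
  rw [Finset.ssubset_def]
  constructor
  · intro i hi
    simp only [Finset.mem_filter, Finset.mem_univ, true_and] at *
    exact fun hPih => hi (Pmono i hp hPih)
  · intro hsub
    have := hsub (by simp only [Finset.mem_filter, Finset.mem_univ, true_and]; exact hni)
    simp only [Finset.mem_filter, Finset.mem_univ, true_and] at this
    exact this hgi

variable [Fintype A] [Fintype B]

theorem determined (Pmono : ∀ i ⦃g g'⦄, g <+: g' → P i g → P i g') (h : H A B) :
    AgWin P φ h ∨ EnvWin P φ h := by
  have key : ∀ n : ℕ, ∀ h : H A B, mC P h = n → AgWin P φ h ∨ EnvWin P φ h := by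
    intro n
    induction n using Nat.strong_induction_on with
    | _ n IH =>
      intro h hm
      have IH' : ∀ g : H A B, h <+: g → (∃ i, ¬ P i h ∧ P i g) →
          AgWin P φ g ∨ EnvWin P φ g := by
        rintro g hpre ⟨i, hni, hPi⟩
        exact IH (mC P g) (hm ▸ mC_lt Pmono hpre hni hPi) g rfl
      have hlen_aux : ∀ g : H A B, h <+: g → (∃ i, ¬ P i h ∧ P i g) →
          h.length < g.length := by
        rintro g hpre ⟨i, hni, hPi⟩
        by_contra hle
        push_neg at hle
        have : h = g := hpre.eq_of_length (le_antisymm hpre.length_le hle)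
        subst this
        exact hni hPi
      by_cases hφ : φ (fun i => P i h)
      · -- the agent is happy if no further event triggers
        set Bad : Set (H A B) :=
          {g | h <+: g ∧ (∃ i, ¬ P i h ∧ P i g) ∧ EnvWin P φ g} with hBad
        have HlenB : ∀ g ∈ Bad, h.length < g.length := fun g hg =>
          hlen_aux g hg.1 hg.2.1
        by_cases hE : h ∈ AttrE Bad
        · right
          set t : H A B → H A B → A → B := fun g =>
            if hg : EnvWin P φ g then Classical.choose hg
            else fun _ _ => Classical.arbitrary B with ht
          refine ⟨swE Bad h.length (stratE Bad) t, fun τa => ?_⟩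
          rcases comp_env HlenB τa (stratE Bad) t with ⟨hnone, _⟩ | ⟨K, hKT, hKmin, heq⟩
          · obtain ⟨k, hk⟩ := stratE_reaches hE τa
            exact absurd hk (hnone k)
          · rw [heq]
            have hEW : EnvWin P φ (ext τa (stratE Bad) h K) := hKT.2.2
            have htg : t (ext τa (stratE Bad) h K) = Classical.choose hEW :=
              dif_pos hEW
            rw [htg]
            exact Classical.choose_spec hEW τa
        · left
          set Trig : Set (H A B) := {g | h <+: g ∧ ∃ i, ¬ P i h ∧ P i g} with hTrig
          have HlenT : ∀ g ∈ Trig, h.length < g.length := fun g hg =>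
            hlen_aux g hg.1 hg.2
          set t : H A B → H A B → A := fun g =>
            if hg : AgWin P φ g then Classical.choose hg
            else fun _ => Classical.arbitrary A with ht
          refine ⟨swA Trig h.length (avoidA Bad) t, fun τe => ?_⟩
          have hsafe := avoidA_safe hE τe
          rcases comp_agent HlenT (avoidA Bad) t τe with ⟨hnone, heq⟩ | ⟨K, hKT, hKmin, heq⟩
          · rw [heq, mem_Wset_iff Pmono]
            have hev : (fun i => ∃ k, P i (ext (avoidA Bad) τe h k)) =
                fun i => P i h := by
              funext i
              apply propext
              constructor
              · rintro ⟨k, hk⟩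
                by_contra hni
                exact hnone k ⟨prefix_ext k, i, hni, hk⟩
              · intro hPi; exact ⟨0, hPi⟩
            rw [hev]
            exact hφ
          · rw [heq]
            have hgT : ext (avoidA Bad) τe h K ∈ Trig := hKT
            have hgnB : ext (avoidA Bad) τe h K ∉ Bad := fun hB =>
              hsafe K (subset_attrE hB)
            have hAW : AgWin P φ (ext (avoidA Bad) τe h K) := by
              rcases IH' _ hgT.1 hgT.2 with h1 | h1
              · exact h1
              · exact absurd ⟨hgT.1, hgT.2, h1⟩ hgnB
            have htg : t (ext (avoidA Bad) τe h K) = Classical.choose hAW :=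
              dif_pos hAW
            rw [htg]
            exact Classical.choose_spec hAW τe
      · -- the agent needs some further event
        set Good : Set (H A B) :=
          {g | h <+: g ∧ (∃ i, ¬ P i h ∧ P i g) ∧ AgWin P φ g} with hGood
        have HlenG : ∀ g ∈ Good, h.length < g.length := fun g hg =>
          hlen_aux g hg.1 hg.2.1
        by_cases hA : h ∈ AttrA Good
        · left
          set t : H A B → H A B → A := fun g =>
            if hg : AgWin P φ g then Classical.choose hg
            else fun _ => Classical.arbitrary A with ht
          refine ⟨swA Good h.length (stratA Good) t, fun τe => ?_⟩
          rcases comp_agent HlenG (stratA Good) t τe with ⟨hnone, _⟩ | ⟨K, hKT, hKmin, heq⟩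
          · obtain ⟨k, hk⟩ := stratA_reaches hA τe
            exact absurd hk (hnone k)
          · rw [heq]
            have hAW : AgWin P φ (ext (stratA Good) τe h K) := hKT.2.2
            have htg : t (ext (stratA Good) τe h K) = Classical.choose hAW :=
              dif_pos hAW
            rw [htg]
            exact Classical.choose_spec hAW τe
        · right
          set Trig : Set (H A B) := {g | h <+: g ∧ ∃ i, ¬ P i h ∧ P i g} with hTrig
          have HlenT : ∀ g ∈ Trig, h.length < g.length := fun g hg =>
            hlen_aux g hg.1 hg.2
          set t : H A B → H A B → A → B := fun g =>
            if hg : EnvWin P φ g then Classical.choose hg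
            else fun _ _ => Classical.arbitrary B with ht
          refine ⟨swE Trig h.length (avoidE Good) t, fun τa => ?_⟩
          have hsafe := avoidE_safe hA τa
          rcases comp_env HlenT τa (avoidE Good) t with ⟨hnone, heq⟩ | ⟨K, hKT, hKmin, heq⟩
          · rw [heq, mem_Wset_iff Pmono]
            have hev : (fun i => ∃ k, P i (ext τa (avoidE Good) h k)) =
                fun i => P i h := by
              funext i
              apply propext
              constructor
              · rintro ⟨k, hk⟩
                by_contra hni
                exact hnone k ⟨prefix_ext k, i, hni, hk⟩
              · intro hPi; exact ⟨0, hPi⟩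
            rw [hev]
            exact hφ
          · rw [heq]
            have hgT : ext τa (avoidE Good) h K ∈ Trig := hKT
            have hgnG : ext τa (avoidE Good) h K ∉ Good := fun hG =>
              hsafe K (subset_attrA hG)
            have hEW : EnvWin P φ (ext τa (avoidE Good) h K) := by
              rcases IH' _ hgT.1 hgT.2 with h1 | h1
              · exact absurd ⟨hgT.1, hgT.2, h1⟩ hgnG
              · exact h1
            have htg : t (ext τa (avoidE Good) h K) = Classical.choose hEW :=
              dif_pos hEW
            rw [htg]
            exact Classical.choose_spec hEW τa
  exact key _ h rfl

end Det


/-! ### Converting history-based strategies to the original formalism -/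

section Convert

def agOf (σag : List B → A) : H A B → A := fun g => σag (g.map Prod.snd)

def envOf (σenv : List A → B) : H A B → A → B := fun g a => σenv (g.map Prod.fst ++ [a])

lemma playPrefix_eq_ext (σag : List B → A) (σenv : List A → B) (k : ℕ) :
    playPrefix σag σenv k = ext (agOf σag) (envOf σenv) [] k := by
  induction k with
  | zero => rfl
  | succ k ih =>
    show (let h := playPrefix σag σenv k
      let a := σag (h.map Prod.snd)
      let b := σenv (h.map Prod.fst ++ [a])
      h ++ [(a, b)]) = _
    rw [ext_succ, ← ih]
    rfl

lemma play_eq_πF (σag : List B → A) (σenv : List A → B) :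
    play σag σenv = πF (agOf σag) (envOf σenv) [] := by
  funext n
  have h1 : πF (agOf σag) (envOf σenv) [] n =
      (playPrefix σag σenv (n+1)).getD n (Classical.arbitrary _) := by
    rw [πF, ← playPrefix_eq_ext]
  have hlen : (playPrefix σag σenv n).length = n := by
    rw [playPrefix_eq_ext]; simp
  have h2 : playPrefix σag σenv (n+1) = playPrefix σag σenv n ++ [play σag σenv n] := rfl
  rw [h1, h2, List.getD_eq_getElem _ _ (by simp [hlen])]
  exact (List.getElem_concat_length hlen.symm _).symm

/-- reconstruct, move by move, the history corresponding to a list of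
environment moves, when the agent follows the history strategy `τ`. -/
def recon (τ : H A B → A) : List B → H A B
  | [] => []
  | b :: bs => (τ [], b) :: recon (fun g => τ ((τ [], b) :: g)) bs

lemma recon_spec : ∀ (g : H A B) (τ : H A B → A),
    (∀ k (hk : k < g.length), (g[k]).1 = τ (g.take k)) →
    recon τ (g.map Prod.snd) = g := by
  intro g
  induction g with
  | nil => intro τ _; rfl
  | cons p g' ihg =>
    intro τ hcons
    obtain ⟨x, y⟩ := p
    have h0 : x = τ [] := hcons 0 (by simp)
    subst h0
    show recon τ (y :: g'.map Prod.snd) = _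
    rw [recon]
    congr 1
    apply ihg
    intro k hk
    have := hcons (k+1) (by simpa using hk)
    rwa [List.getElem_cons_succ, List.take_succ_cons] at this

def toAg (τ : H A B → A) : List B → A := fun bs => τ (recon τ bs)

lemma ext_consA (τa : H A B → A) (τe : H A B → A → B) (n : ℕ) :
    ∀ k (hk : k < (ext τa τe ([] : H A B) n).length),
      ((ext τa τe [] n)[k]).1 = τa ((ext τa τe [] n).take k) := by
  intro k hk
  have hkn : k < n := by simpa using hk
  have htk : (ext τa τe ([] : H A B) n).take k = ext τa τe [] k := by
    have := ext_take (τa := τa) (τe := τe) (h := ([] : H A B)) (le_of_lt hkn)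
    simpa using this
  have hpre : ext τa τe ([] : H A B) (k+1) <+: ext τa τe [] n := ext_prefix hkn
  have h1 : ((ext τa τe ([] : H A B) (k+1))[k]'(by simp)) = (ext τa τe [] n)[k] :=
    hpre.getElem (by simp)
  rw [← h1, htk]
  have hlen : (ext τa τe ([] : H A B) k).length = k := by simp
  have h3 : (ext τa τe ([] : H A B) (k+1))[k]'(by simp) =
      (τa (ext τa τe [] k), τe (ext τa τe [] k) (τa (ext τa τe [] k))) :=
    List.getElem_concat_length hlen.symm (by simp)
  rw [h3]

lemma toAg_plays (τ : H A B → A) (σenv : List A → B) :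
    play (toAg τ) σenv = πF τ (envOf σenv) [] := by
  have hext : ∀ k, ext (agOf (toAg τ)) (envOf σenv) ([] : H A B) k =
      ext τ (envOf σenv) [] k := by
    intro k
    induction k with
    | zero => rfl
    | succ k ih =>
      have ha : agOf (toAg τ) (ext τ (envOf σenv) ([] : H A B) k) =
          τ (ext τ (envOf σenv) [] k) := by
        rw [agOf, toAg, recon_spec _ _ (ext_consA τ (envOf σenv) k)]
      rw [ext_succ, ext_succ, ih, ha]
  rw [play_eq_πF]
  funext n
  rw [πF, πF, hext (n+1)]

def recone (τ : H A B → A → B) : List A → H A B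
  | [] => []
  | a :: as => (a, τ [] a) :: recone (fun g => τ ((a, τ [] a) :: g)) as

lemma recone_spec : ∀ (g : H A B) (τ : H A B → A → B),
    (∀ k (hk : k < g.length), (g[k]).2 = τ (g.take k) (g[k]).1) →
    ∀ a, recone τ (g.map Prod.fst ++ [a]) = g ++ [(a, τ g a)] := by
  intro g
  induction g with
  | nil => intro τ _ a; rfl
  | cons p g' ihg =>
    intro τ hcons a
    obtain ⟨x, y⟩ := p
    have h0 : y = τ [] x := by
      have := hcons 0 (by simp)
      simpa using this
    subst h0
    show recone τ (x :: (g'.map Prod.fst ++ [a])) = _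
    rw [recone]
    show _ = (x, τ [] x) :: (g' ++ [(a, τ ((x, τ [] x) :: g') a)])
    congr 1
    apply ihg
    intro k hk
    have := hcons (k+1) (by simpa using hk)
    rwa [List.getElem_cons_succ, List.take_succ_cons] at this

def toEnv (τ : H A B → A → B) : List A → B := fun as =>
  ((recone τ as).getLastD (Classical.arbitrary _)).2

lemma ext_consE (τa : H A B → A) (τe : H A B → A → B) (n : ℕ) :
    ∀ k (hk : k < (ext τa τe ([] : H A B) n).length),
      ((ext τa τe [] n)[k]).2 = τe ((ext τa τe [] n).take k) ((ext τa τe [] n)[k]).1 := by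
  intro k hk
  have hkn : k < n := by simpa using hk
  have htk : (ext τa τe ([] : H A B) n).take k = ext τa τe [] k := by
    have := ext_take (τa := τa) (τe := τe) (h := ([] : H A B)) (le_of_lt hkn)
    simpa using this
  have hpre : ext τa τe ([] : H A B) (k+1) <+: ext τa τe [] n := ext_prefix hkn
  have h1 : ((ext τa τe ([] : H A B) (k+1))[k]'(by simp)) = (ext τa τe [] n)[k] :=
    hpre.getElem (by simp)
  rw [← h1, htk]
  have hlen : (ext τa τe ([] : H A B) k).length = k := by simp
  have h3 : (ext τa τe ([] : H A B) (k+1))[k]'(by simp) =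
      (τa (ext τa τe [] k), τe (ext τa τe [] k) (τa (ext τa τe [] k)))  :=
    List.getElem_concat_length hlen.symm (by simp)
  rw [h3]

lemma toEnv_plays (τ : H A B → A → B) (σag : List B → A) :
    play σag (toEnv τ) = πF (agOf σag) τ [] := by
  have hext : ∀ k, ext (agOf σag) (envOf (toEnv τ)) ([] : H A B) k =
      ext (agOf σag) τ [] k := by
    intro k
    induction k with
    | zero => rfl
    | succ k ih =>
      have hb : ∀ a, envOf (toEnv τ) (ext (agOf σag) τ ([] : H A B) k) a =
          τ (ext (agOf σag) τ [] k) a := by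
        intro a
        rw [envOf, toEnv, recone_spec _ _ (ext_consE (agOf σag) τ k) a,
          List.getLastD_concat]
      rw [ext_succ, ext_succ, ih, hb]
  rw [play_eq_πF]
  funext n
  rw [πF, πF, hext (n+1)]

end Convert


/-! ### Reachability / safety events -/

section Events

/-- some nonempty prefix of `h` belongs to `T` -/
def PR (T : Set (H A B)) : H A B → Prop := fun h =>
  ∃ k, 1 ≤ k ∧ k ≤ h.length ∧ h.take k ∈ T

/-- some nonempty prefix of `h` violates `T` -/
def PV (T : Set (H A B)) : H A B → Prop := fun h =>
  ∃ k, 1 ≤ k ∧ k ≤ h.length ∧ h.take k ∉ T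

lemma take_eq_of_prefix {g g' : H A B} (hp : g <+: g') {k : ℕ} (hk : k ≤ g.length) :
    g'.take k = g.take k := by
  have h1 : g = g'.take g.length := List.prefix_iff_eq_take.mp hp
  calc g'.take k = (g'.take g.length).take k := by
        rw [List.take_take, Nat.min_eq_left hk]
    _ = g.take k := by rw [← h1]

lemma PR_mono (T : Set (H A B)) ⦃g g' : H A B⦄ (hp : g <+: g') (hg : PR T g) :
    PR T g' := by
  obtain ⟨k, h1, h2, h3⟩ := hg
  exact ⟨k, h1, le_trans h2 hp.length_le, by rw [take_eq_of_prefix hp h2]; exact h3⟩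

lemma PV_mono (T : Set (H A B)) ⦃g g' : H A B⦄ (hp : g <+: g') (hg : PV T g) :
    PV T g' := by
  obtain ⟨k, h1, h2, h3⟩ := hg
  exact ⟨k, h1, le_trans h2 hp.length_le, by rw [take_eq_of_prefix hp h2]; exact h3⟩

lemma reach_iff_event (T : Set (H A B)) (π : ℕ → A × B) :
    π ∈ Reach T ↔ ∃ n, PR T (pre π n) := by
  constructor
  · rintro ⟨k, hk1, hk2⟩
    exact ⟨k, k, hk1, by simp, by rw [pre_take π (le_refl k)]; exact hk2⟩
  · rintro ⟨n, k, h1, h2, h3⟩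
    rw [pre_length] at h2
    rw [pre_take π h2] at h3
    exact ⟨k, h1, h3⟩

lemma safe_iff_event (T : Set (H A B)) (π : ℕ → A × B) :
    π ∈ Safe T ↔ ¬ ∃ n, PV T (pre π n) := by
  constructor
  · rintro hS ⟨n, k, h1, h2, h3⟩
    rw [pre_length] at h2
    rw [pre_take π h2] at h3
    exact h3 (hS k h1)
  · intro hn k hk1
    by_contra hmem
    exact hn ⟨k, k, hk1, by simp, by rw [pre_take π (le_refl k)]; exact hmem⟩

inductive EvIdx : Type
  | re | se | rt | st
  deriving DecidableEq

instance : Fintype EvIdx :=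
  ⟨{EvIdx.re, EvIdx.se, EvIdx.rt, EvIdx.st}, fun i => by cases i <;> decide⟩

def P4 (E₁ E₂ T₁ T₂ : Set (H A B)) : EvIdx → H A B → Prop
  | .re => PR E₁
  | .se => PV E₂
  | .rt => PR T₁
  | .st => PV T₂

def φ4 : (EvIdx → Prop) → Prop := fun f => (¬ f .re ∨ f .se) ∨ (f .rt ∧ ¬ f .st)

lemma P4_mono (E₁ E₂ T₁ T₂ : Set (H A B)) :
    ∀ i ⦃g g' : H A B⦄, g <+: g' → P4 E₁ E₂ T₁ T₂ i g → P4 E₁ E₂ T₁ T₂ i g' := by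
  intro i
  cases i
  · exact PR_mono E₁
  · exact PV_mono E₂
  · exact PR_mono T₁
  · exact PV_mono T₂

end Events

end
end RSdet


set_option maxHeartbeats 1000000 in
open RSdet in
/-- For `Env = Reach E₁ ∩ Safe E₂` and `Task = Reach T₁ ∩ Safe T₂`, there is an
agent strategy enforcing `Task` under `Env` iff there is an agent strategy
enforcing `Envᶜ ∪ Task`. -/
theorem enforces_under_iff_enforces_implication {A B : Type}
    [Fintype A] [Fintype B] [Nonempty A] [Nonempty B]
    (E₁ E₂ T₁ T₂ : Set (List (A × B))) :
    (∃ σag : List B → A,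
        EnforcesUnder σag (Reach T₁ ∩ Safe T₂) (Reach E₁ ∩ Safe E₂)) ↔
      (∃ σag : List B → A,
        AgentEnforces σag ((Reach E₁ ∩ Safe E₂)ᶜ ∪ (Reach T₁ ∩ Safe T₂))) := by
  classical
  have Pmono := P4_mono E₁ E₂ T₁ T₂
  have hWset : ∀ π : ℕ → A × B,
      π ∈ Wset (P4 E₁ E₂ T₁ T₂) φ4 ↔
        π ∈ ((Reach E₁ ∩ Safe E₂)ᶜ ∪ (Reach T₁ ∩ Safe T₂)) := by
    intro π
    have h : π ∈ Wset (P4 E₁ E₂ T₁ T₂) φ4 ↔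
        ((¬ ∃ n, PR E₁ (pre π n)) ∨ (∃ n, PV E₂ (pre π n))) ∨
          ((∃ n, PR T₁ (pre π n)) ∧ ¬ ∃ n, PV T₂ (pre π n)) := Iff.rfl
    have e0 : (∃ n, PR E₁ (pre π n)) ↔ π ∈ Reach E₁ := (reach_iff_event E₁ π).symm
    have e1 : (∃ n, PV E₂ (pre π n)) ↔ ¬ π ∈ Safe E₂ := by
      rw [safe_iff_event]
      exact not_not.symm
    have e2 : (∃ n, PR T₁ (pre π n)) ↔ π ∈ Reach T₁ := (reach_iff_event T₁ π).symm
    have e3 : (∃ n, PV T₂ (pre π n)) ↔ ¬ π ∈ Safe T₂ := by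
      rw [safe_iff_event]
      exact not_not.symm
    rw [h, e0, e1, e2, e3]
    simp only [Set.mem_union, Set.mem_compl_iff, Set.mem_inter_iff]
    generalize (π ∈ Reach E₁) = q1
    generalize (π ∈ Safe E₂) = q2
    generalize (π ∈ Reach T₁) = q3
    generalize (π ∈ Safe T₂) = q4
    tauto
  constructor
  · rintro ⟨σag, hσ⟩
    rcases determined (P := P4 E₁ E₂ T₁ T₂) (φ := φ4) Pmono ([] : H A B) with
      ⟨τa, hτa⟩ | ⟨τe, hτe⟩
    · refine ⟨toAg τa, fun σenv => ?_⟩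
      have := hτa (envOf σenv)
      rw [← toAg_plays] at this
      exact (hWset _).mp this
    · exfalso
      have hplays : ∀ σag' : List B → A,
          play σag' (toEnv τe) = πF (agOf σag') τe [] := toEnv_plays τe
      have hnot : ∀ σag' : List B → A,
          play σag' (toEnv τe) ∈ (Reach E₁ ∩ Safe E₂) ∧
            play σag' (toEnv τe) ∉ (Reach T₁ ∩ Safe T₂) := by
        intro σag'
        have hnw := hτe (agOf σag')
        rw [← hplays σag'] at hnw
        rw [hWset] at hnw
        simp only [Set.mem_union, Set.mem_compl_iff] at hnw
        push_neg at hnw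
        exact hnw
      have henv : EnvEnforces (toEnv τe) (Reach E₁ ∩ Safe E₂) := fun σag' =>
        (hnot σag').1
      exact (hnot σag).2 (hσ (toEnv τe) henv)
  · rintro ⟨σag, hσ⟩
    refine ⟨σag, fun σenv henv => ?_⟩
    rcases hσ σenv with hc | hc
    · exact absurd (henv σag) hc
    · exact hc
end

section
/- Positional strategies suffice for safety games on finite arenas: let M be a DFA over the alphabet A × B with finite state type Q. If there exists an agent strategy σag such that for every environment strategy σenv and every k ≥ 1, M.eval(play(σag, σenv)_{<k}) ∈ M.accept, then there exists a function f : Q → A such that the induced positional strategy Strategy(M, f) has the same property: for every σenv and every k ≥ 1, M.eval(play(Strategy(M, f), σenv)_{<k}) ∈ M.accept. -/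
/-- The positional agent strategy induced by a DFA `M` over `A × B` and an
output function `f : Q → A`: on an environment-move history `x₀ … x_{k−1}` it
traverses `q₀ = M.start`, `q_{i+1} = M.step q_i (f q_i, x_i)` and outputs
`f q_k`. -/
def posStrategy {A B Q : Type} (M : DFA (A × B) Q) (f : Q → A) (h : List B) : A :=
  f (h.foldl (fun q x => M.step q (f q, x)) M.start)

namespace PosSafeAux

variable {A B Q : Type}

lemma pre_play (σag : List B → A) (σenv : List A → B) (k : ℕ) :
    pre (play σag σenv) k = playPrefix σag σenv k := by
  induction k with
  | zero => rfl
  | succ k ih =>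
    simp only [pre, List.range_succ, List.map_append, List.map_cons, List.map_nil]
    rw [show (List.range k).map (play σag σenv) = pre (play σag σenv) k from rfl, ih]
    rfl

lemma playPrefix_congr (σag : List B → A) {σenv₁ σenv₂ : List A → B}
    (h : ∀ l : List A, l ≠ [] → σenv₁ l = σenv₂ l) (k : ℕ) :
    playPrefix σag σenv₁ k = playPrefix σag σenv₂ k := by
  induction k with
  | zero => rfl
  | succ k ih =>
    show playPrefix σag σenv₁ k ++ _ = playPrefix σag σenv₂ k ++ _
    rw [ih, h _ (by simp)]

lemma playPrefix_shift (σag : List B → A) (σenv : List A → B) (k : ℕ) :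
    playPrefix σag σenv (k + 1) =
      (σag [], σenv [σag []]) ::
        playPrefix (fun h => σag (σenv [σag []] :: h)) (fun l => σenv (σag [] :: l)) k := by
  induction k with
  | zero => rfl
  | succ k ih =>
    show playPrefix σag σenv (k+1) ++ _ = _ :: (playPrefix _ _ k ++ _)
    rw [ih]
    simp [playPrefix]

/-- Iterated one-step safety sets. -/
def safeN (M : DFA (A × B) Q) : ℕ → Set Q
  | 0 => Set.univ
  | n + 1 => {q | ∃ a : A, ∀ b : B,
      M.step q (a, b) ∈ M.accept ∧ M.step q (a, b) ∈ safeN M n}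

lemma safeN_succ_subset (M : DFA (A × B) Q) : ∀ n, safeN M (n + 1) ⊆ safeN M n := by
  intro n
  induction n with
  | zero => intro q _; trivial
  | succ n ih =>
    rintro q ⟨a, ha⟩
    exact ⟨a, fun b => ⟨(ha b).1, ih (ha b).2⟩⟩

lemma safeN_antitone (M : DFA (A × B) Q) {m n : ℕ} (h : n ≤ m) :
    safeN M m ⊆ safeN M n := by
  induction h with
  | refl => exact fun q hq => hq
  | step h ih => exact fun q hq => ih (safeN_succ_subset M _ hq)

/-- `τ` wins the `n`-step safety game from `q`. -/
def wins (M : DFA (A × B) Q) : ℕ → (List B → A) → Q → Prop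
  | 0, _, _ => True
  | n + 1, τ, q => ∀ b : B, M.step q (τ [], b) ∈ M.accept ∧
      wins M n (fun h => τ (b :: h)) (M.step q (τ [], b))

lemma wins_mem_safeN (M : DFA (A × B) Q) :
    ∀ n (τ : List B → A) (q : Q), wins M n τ q → q ∈ safeN M n := by
  intro n
  induction n with
  | zero => intro τ q _; trivial
  | succ n ih =>
    intro τ q hw
    exact ⟨τ [], fun b => ⟨(hw b).1, ih _ _ (hw b).2⟩⟩

lemma toWins (M : DFA (A × B) Q) :
    ∀ n (q : Q) (σag : List B → A),
      (∀ σenv : List A → B, ∀ k, 1 ≤ k → k ≤ n →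
        M.evalFrom q (playPrefix σag σenv k) ∈ M.accept) →
      wins M n σag q := by
  intro n
  induction n with
  | zero => intro q σag _; trivial
  | succ n ih =>
    intro q σag hsafe b
    constructor
    · have := hsafe (fun _ => b) 1 le_rfl (by omega)
      simpa [playPrefix, DFA.evalFrom] using this
    · apply ih
      intro σenv' k hk1 hkn
      set σenv : List A → B := fun l =>
        match l with
        | _ :: x :: xs => σenv' (x :: xs)
        | _ => b with hσenv
      have key := hsafe σenv (k + 1) (by omega) (by omega)
      rw [playPrefix_shift] at key
      have hb : σenv [σag []] = b := rfl
      have hcong : playPrefix (fun h => σag (σenv [σag []] :: h))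
          (fun l => σenv (σag [] :: l)) k
          = playPrefix (fun h => σag (b :: h)) σenv' k := by
        rw [hb]
        apply playPrefix_congr
        intro l hl
        cases l with
        | nil => exact absurd rfl hl
        | cons x xs => rfl
      rw [hcong, hb] at key
      simpa [DFA.evalFrom] using key

lemma exists_good [Finite A] (M : DFA (A × B) Q) {q : Q}
    (hq : ∀ n, q ∈ safeN M n) :
    ∃ a : A, ∀ b : B, M.step q (a, b) ∈ M.accept ∧ ∀ n, M.step q (a, b) ∈ safeN M n := by
  have h1 : ∀ n, ∃ a : A, ∀ b : B,
      M.step q (a, b) ∈ M.accept ∧ M.step q (a, b) ∈ safeN M n := fun n => hq (n + 1)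
  choose g hg using h1
  obtain ⟨a, ha⟩ := Finite.exists_infinite_fiber g
  refine ⟨a, fun b => ?_⟩
  have hinf : (g ⁻¹' {a}).Infinite := Set.infinite_coe_iff.mp ha
  obtain ⟨m0, hm0, _⟩ := hinf.exists_gt 0
  have hm0a : g m0 = a := hm0
  constructor
  · have := (hg m0 b).1; rwa [hm0a] at this
  · intro n
    obtain ⟨m, hm, hnm⟩ := hinf.exists_gt n
    have hma : g m = a := hm
    have := (hg m b).2
    rw [hma] at this
    exact safeN_antitone M (le_of_lt hnm) this

end PosSafeAux

/-- Positional strategies suffice for safety games on finite arenas: if some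
agent strategy guarantees that against every environment strategy the run of
the play in `M` stays in `M.accept` at every time `k ≥ 1`, then some positional
strategy induced by a function `f : Q → A` does so as well. -/


theorem positional_suffices_safe {A B Q : Type}
    [Fintype A] [Fintype B] [Nonempty A] [Nonempty B] [Fintype Q]
    (M : DFA (A × B) Q)
    (h : ∃ σag : List B → A, ∀ σenv : List A → B,
      ∀ k, 1 ≤ k → M.eval (pre (play σag σenv) k) ∈ M.accept) :
    ∃ f : Q → A, ∀ σenv : List A → B,
      ∀ k, 1 ≤ k → M.eval (pre (play (posStrategy M f) σenv) k) ∈ M.accept := by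
  classical
  obtain ⟨σag, hσ⟩ := h
  have hstart : ∀ n, M.start ∈ PosSafeAux.safeN M n := by
    intro n
    refine PosSafeAux.wins_mem_safeN M n σag M.start (PosSafeAux.toWins M n M.start σag ?_)
    intro σenv k hk _
    have := hσ σenv k hk
    rwa [PosSafeAux.pre_play] at this
  set W : Set Q := {q | ∀ n, q ∈ PosSafeAux.safeN M n} with hW
  have hch : ∀ q : Q, q ∈ W → ∃ a : A, ∀ b : B,
      M.step q (a, b) ∈ M.accept ∧ M.step q (a, b) ∈ W := by
    intro q hq
    obtain ⟨a, ha⟩ := PosSafeAux.exists_good M hq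
    exact ⟨a, fun b => ⟨(ha b).1, (ha b).2⟩⟩
  set f : Q → A := fun q => if hq : q ∈ W then (hch q hq).choose else Classical.arbitrary A
    with hf
  have hfq : ∀ q : Q, q ∈ W → ∀ b : B,
      M.step q (f q, b) ∈ M.accept ∧ M.step q (f q, b) ∈ W := by
    intro q hq b
    have : f q = (hch q hq).choose := by rw [hf]; simp [hq]
    rw [this]
    exact (hch q hq).choose_spec b
  refine ⟨f, ?_⟩
  intro σenv k hk
  rw [PosSafeAux.pre_play]
  set σ : List B → A := posStrategy M f with hσdef
  have inv : ∀ k, (M.eval (playPrefix σ σenv k) ∈ W) ∧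
      ((playPrefix σ σenv k).map Prod.snd).foldl
        (fun q x => M.step q (f q, x)) M.start = M.eval (playPrefix σ σenv k) ∧
      (1 ≤ k → M.eval (playPrefix σ σenv k) ∈ M.accept) := by
    intro k
    induction k with
    | zero =>
      refine ⟨fun n => hstart n, rfl, by omega⟩
    | succ k ih =>
      obtain ⟨ihW, ihfold, _⟩ := ih
      set h' := playPrefix σ σenv k with hh'
      set a : A := σ (h'.map Prod.snd) with ha
      set b : B := σenv (h'.map Prod.fst ++ [a]) with hb
      have hpp : playPrefix σ σenv (k + 1) = h' ++ [(a, b)] := rfl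
      have haf : a = f (M.eval h') := by
        rw [ha, hσdef]
        show f ((h'.map Prod.snd).foldl (fun q x => M.step q (f q, x)) M.start) = _
        rw [ihfold]
      have heval : M.eval (h' ++ [(a, b)]) = M.step (M.eval h') (a, b) := by
        show (h' ++ [(a, b)]).foldl M.step M.start = _
        rw [List.foldl_append]
        rfl
      have hstep := hfq (M.eval h') ihW b
      rw [← haf] at hstep
      refine ⟨?_, ?_, fun _ => ?_⟩
      · rw [hpp, heval]; exact hstep.2
      · rw [hpp, heval]
        simp only [List.map_append, List.map_cons, List.map_nil, List.foldl_append,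
          List.foldl_cons, List.foldl_nil]
        rw [ihfold, ← haf]
      · rw [hpp, heval]; exact hstep.1
  exact (inv k).2.2 hk
end

section
/- Characterization of environment strategies enforcing a safety specification (strategies enforcing safety never leave the winning region): let M be a DFA over A × B with finite state type and accepting set F, and let T be the set of nonempty finite words accepted by M. For a state q of M, define EnvWinsFrom(q) to hold iff there exists an environment strategy σenv such that for every agent strategy σag and every k ≥ 1, M.evalFrom q (play(σag, σenv)_{<k}) ∈ F. Then an environment strategy σenv enforces Safe T if and only if for every agent strategy σag and every k ≥ 0: EnvWinsFrom(M.eval(play(σag, σenv)_{<k})), and moreover M.eval(play(σag, σenv)_{<k}) ∈ F whenever k ≥ 1. -/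
/-- `EnvWinsSafeFrom M q` : the environment has a strategy ensuring that,
starting the run of `M` from state `q`, every state reached after `k ≥ 1`
letters of the play lies in `M.accept`. -/
def EnvWinsSafeFrom {A B Q : Type} (M : DFA (A × B) Q) (q : Q) : Prop :=
  ∃ σenv : List A → B, ∀ σag : List B → A, ∀ k, 1 ≤ k →
    M.evalFrom q (pre (play σag σenv) k) ∈ M.accept

theorem pre_succ {α : Type} (π : ℕ → α) (k : ℕ) :
    pre π (k + 1) = pre π k ++ [π k] := by
  simp [pre, List.range_succ]

theorem playPrefix_eq_pre {A B : Type} (σag : List B → A) (σenv : List A → B) (k : ℕ) :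
    playPrefix σag σenv k = pre (play σag σenv) k := by
  induction k with
  | zero => rfl
  | succ k ih =>
    rw [pre_succ, ← ih]
    rfl

theorem playPrefix_length {A B : Type} (σag : List B → A) (σenv : List A → B) (k : ℕ) :
    (playPrefix σag σenv k).length = k := by
  rw [playPrefix_eq_pre]; simp [pre]

theorem playPrefix_agree {A B : Type} (σag σag' : List B → A) (σenv : List A → B) (k : ℕ)
    (h : ∀ bs : List B, bs.length < k → σag bs = σag' bs) :
    ∀ i ≤ k, playPrefix σag σenv i = playPrefix σag' σenv i := by
  intro i hi
  induction i with
  | zero => rfl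
  | succ i ih =>
    have hik : i ≤ k := Nat.le_of_succ_le hi
    have hp := ih hik
    show playPrefix σag σenv i ++ _ = playPrefix σag' σenv i ++ _
    rw [hp, h _ (by rw [List.length_map, playPrefix_length]; omega)]

def shiftEnv {A B : Type} (σenv : List A → B) (P : List (A × B)) : List A → B :=
  fun h => σenv (P.map Prod.fst ++ h)

def extAgent {A B : Type} (σag : List B → A) (k : ℕ) (σag' : List B → A) : List B → A :=
  fun bs => if bs.length < k then σag bs else σag' (bs.drop k)

theorem playPrefix_shift {A B : Type} (σag σag' : List B → A) (σenv : List A → B) (k j : ℕ) :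
    playPrefix (extAgent σag k σag') σenv (k + j)
      = playPrefix σag σenv k
        ++ playPrefix σag' (shiftEnv σenv (playPrefix σag σenv k)) j := by
  induction j with
  | zero =>
    simp only [Nat.add_zero, playPrefix, List.append_nil]
    exact (playPrefix_agree σag (extAgent σag k σag') σenv k
      (fun bs hbs => by simp [extAgent, hbs]) k le_rfl).symm
  | succ j ih =>
    set P := playPrefix σag σenv k with hP
    set σenv' := shiftEnv σenv P with hE
    have hPk : P.length = k := playPrefix_length _ _ _
    rw [show k + (j + 1) = (k + j) + 1 from rfl]
    simp only [playPrefix]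
    rw [ih, List.append_assoc]
    congr 1
    set h' := playPrefix σag' σenv' j with hh
    have ha : extAgent σag k σag' ((P ++ h').map Prod.snd) = σag' (h'.map Prod.snd) := by
      rw [extAgent]
      simp only [List.map_append]
      rw [if_neg (by simp [hPk]),
        List.drop_append_of_le_length (le_of_eq (by simp [hPk])),
        List.drop_eq_nil_of_le (le_of_eq (by simp [hPk])), List.nil_append]
    rw [ha]
    have hb : (P ++ h').map Prod.fst ++ [σag' (h'.map Prod.snd)]
        = P.map Prod.fst ++ (h'.map Prod.fst ++ [σag' (h'.map Prod.snd)]) := by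
      simp [List.append_assoc]
    rw [hb]
    rfl

/-- Characterization of environment strategies enforcing a safety
specification: `σenv` enforces `Safe T` (where `T` is the set of nonempty
finite words accepted by `M`) iff against every agent strategy the run of the
play in `M` stays inside the environment's winning region of the safety game,
and stays in `M.accept` from time `1` on. -/
theorem env_enforces_safe_characterization {A B Q : Type}
    [Fintype A] [Fintype B] [Nonempty A] [Nonempty B] [Fintype Q]
    (M : DFA (A × B) Q)
    (T : Set (List (A × B))) (hT : T = {w | w ≠ [] ∧ w ∈ M.accepts})
    (σenv : List A → B) :
    EnvEnforces σenv (Safe T) ↔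
      ∀ σag : List B → A, ∀ k : ℕ,
        EnvWinsSafeFrom M (M.eval (pre (play σag σenv) k)) ∧
        (1 ≤ k → M.eval (pre (play σag σenv) k) ∈ M.accept) := by
  constructor
  · intro hEnf σag k
    constructor
    · refine ⟨shiftEnv σenv (pre (play σag σenv) k), fun σag' m hm => ?_⟩
      rw [← playPrefix_eq_pre σag σenv]
      have hmem := hEnf (extAgent σag k σag') (k + m) (by omega)
      rw [hT] at hmem
      have hacc : M.eval (pre (play (extAgent σag k σag') σenv) (k + m)) ∈ M.accept :=
        (DFA.mem_accepts M).mp hmem.2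
      rw [← playPrefix_eq_pre, playPrefix_shift, playPrefix_eq_pre σag',
        DFA.eval, DFA.evalFrom_of_append, ← DFA.eval] at hacc
      exact hacc
    · intro hk
      have hmem := hEnf σag k hk
      rw [hT] at hmem
      exact (DFA.mem_accepts M).mp hmem.2
  · intro H σag k hk
    rw [hT]
    refine ⟨?_, (DFA.mem_accepts M).mpr ((H σag k).2 hk)⟩
    have : (pre (play σag σenv) k).length = k := by simp [pre]
    intro hnil
    rw [hnil] at this
    simp at this
    omega
end

section
/- Reduction of synthesis under a safety environment specification to a game on the restricted arena (general form): let M be a DFA over A × B with finite state type and accepting set F, let T be the set of nonempty finite words accepted by M, and define EnvWinsFrom(q) to hold iff there exists an environment strategy σenv such that for every agent strategy σag and every k ≥ 1, M.evalFrom q (play(σag, σenv)_{<k}) ∈ F. Then for every property Task ⊆ (ℕ → A × B) and every agent strategy σag: σag enforces Task under the environment specification Safe T if and only if for every environment strategy σenv, writing π = play(σag, σenv) and run(k) = M.eval(π_{<k}), the following implication holds: if EnvWinsFrom(run(k)) for all k ≥ 0 and run(k) ∈ F for all k ≥ 1, then π ∈ Task. -/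
namespace SafeRed
variable {A B : Type}

theorem playPrefix_succ (σag : List B → A) (σenv : List A → B) (k : ℕ) :
    playPrefix σag σenv (k+1) = playPrefix σag σenv k ++ [play σag σenv k] := rfl

theorem length_playPrefix (σag : List B → A) (σenv : List A → B) (k : ℕ) :
    (playPrefix σag σenv k).length = k := by
  induction k with
  | zero => rfl
  | succ k ih => simp [playPrefix_succ, ih]

theorem pre_play (σag : List B → A) (σenv : List A → B) (k : ℕ) :
    pre (play σag σenv) k = playPrefix σag σenv k := by
  induction k with
  | zero => rfl
  | succ k ih => simp [pre, List.range_succ, playPrefix_succ, ← ih]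

theorem length_pre {α : Type} (π : ℕ → α) (k : ℕ) : (pre π k).length = k := by simp [pre]

theorem playPrefix_take (σag : List B → A) (σenv : List A → B) {m n : ℕ} (h : m ≤ n) :
    (playPrefix σag σenv n).take m = playPrefix σag σenv m := by
  induction n with
  | zero => simp_all; rfl
  | succ n ih =>
    rcases Nat.lt_or_ge m (n+1) with h' | h'
    · rw [playPrefix_succ, List.take_append_of_le_length (by rw [length_playPrefix]; omega),
        ih (by omega)]
    · have : m = n+1 := le_antisymm h h'
      subst this
      exact List.take_of_length_le (by rw [length_playPrefix])

theorem play_fst (σag : List B → A) (σenv : List A → B) (k : ℕ) :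
    (play σag σenv k).1 = σag ((playPrefix σag σenv k).map Prod.snd) := rfl

theorem play_eq_of_agree (σag σag'' : List B → A) (σenv : List A → B) (j : ℕ)
    (ihe : playPrefix σag'' σenv j = playPrefix σag σenv j)
    (ha : σag'' ((playPrefix σag σenv j).map Prod.snd) = σag ((playPrefix σag σenv j).map Prod.snd)) :
    play σag'' σenv j = play σag σenv j := by
  simp only [play, ihe, ha]

theorem playPrefix_eq_of_agree (σag σag'' : List B → A) (σenv : List A → B) (k : ℕ)
    (hlow : ∀ l : List B, l.length < k → σag'' l = (play σag σenv l.length).1) :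
    ∀ j, j ≤ k → playPrefix σag'' σenv j = playPrefix σag σenv j := by
  intro j
  induction j with
  | zero => intro _; rfl
  | succ j ih =>
    intro hj
    have ihe := ih (by omega)
    have hlen : ((playPrefix σag σenv j).map Prod.snd).length = j := by
      simp [length_playPrefix]
    have ha : σag'' ((playPrefix σag σenv j).map Prod.snd)
        = σag ((playPrefix σag σenv j).map Prod.snd) := by
      rw [hlow _ (by rw [hlen]; omega), hlen, play_fst]
    rw [playPrefix_succ, playPrefix_succ, ihe, play_eq_of_agree σag σag'' σenv j ihe ha]

theorem shift_playPrefix (σag σag' σag'' : List B → A) (σenv σenv' : List A → B) (k : ℕ)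
    (hlow : ∀ l : List B, l.length < k → σag'' l = (play σag σenv l.length).1)
    (hhigh : ∀ l : List B, k ≤ l.length → σag'' l = σag' (l.drop k))
    (henv : ∀ l : List A, σenv' l = σenv ((playPrefix σag σenv k).map Prod.fst ++ l)) :
    ∀ m, playPrefix σag'' σenv (k + m)
      = playPrefix σag σenv k ++ playPrefix σag' σenv' m := by
  intro m
  induction m with
  | zero =>
    rw [Nat.add_zero, show playPrefix σag' σenv' 0 = [] from rfl, List.append_nil]
    exact playPrefix_eq_of_agree σag σag'' σenv k hlow k le_rfl
  | succ m ih =>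
    have h1 : k + (m+1) = (k+m)+1 := rfl
    have hlenf : ((playPrefix σag σenv k).map Prod.fst).length = k := by
      simp [length_playPrefix]
    have hlens : ((playPrefix σag σenv k).map Prod.snd).length = k := by
      simp [length_playPrefix]
    have hplay : play σag'' σenv (k+m) = play σag' σenv' m := by
      simp only [play, ih, List.map_append]
      rw [hhigh _ (by simp [length_playPrefix]),
        show ∀ x y : List B, x.length = k → (x ++ y).drop k = y from
          fun x y hx => by rw [← hx, List.drop_left], henv, List.append_assoc]
      exact hlens
    rw [h1, playPrefix_succ, ih, playPrefix_succ, hplay, List.append_assoc]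

/-- Environment strategy agreement along the real play. -/
theorem play_eq_of_env_agree (σag : List B → A) (σenv σenv' : List A → B)
    (hcons : ∀ n, σenv' ((playPrefix σag σenv n).map Prod.fst ++ [(play σag σenv n).1])
        = σenv ((playPrefix σag σenv n).map Prod.fst ++ [(play σag σenv n).1])) :
    ∀ n, playPrefix σag σenv' n = playPrefix σag σenv n := by
  intro n
  induction n with
  | zero => rfl
  | succ n ih =>
    have hp : play σag σenv' n = play σag σenv n := by
      simp only [play, ih]
      exact congrArg (Prod.mk _) (hcons n)
    rw [playPrefix_succ, playPrefix_succ, ih, hp]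

theorem play_funext_of_env_agree (σag : List B → A) (σenv σenv' : List A → B)
    (hcons : ∀ n, σenv' ((playPrefix σag σenv n).map Prod.fst ++ [(play σag σenv n).1])
        = σenv ((playPrefix σag σenv n).map Prod.fst ++ [(play σag σenv n).1])) :
    play σag σenv' = play σag σenv := by
  funext n
  have ih := play_eq_of_env_agree σag σenv σenv' hcons n
  simp only [play, ih]
  exact congrArg (Prod.mk _) (hcons n)

theorem head?_take_one {α : Type} (l : List α) : (l.take 1).head? = l.head? := by
  cases l <;> simp

/-- After the first deviation at time `j`, the play of `σag'` against `σenv'`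
decomposes as the original prefix of length `j` followed by the sub-play of the
shifted agent against `τ`. -/
theorem deviation_playPrefix (σag σag' σag'' : List B → A) (σenv σenv' τ : List A → B) (j : ℕ)
    (hR : playPrefix σag' σenv' j = playPrefix σag σenv j)
    (hag : ∀ l : List B, σag'' l = σag' ((playPrefix σag σenv j).map Prod.snd ++ l))
    (hdev : ∀ l' : List A, l'.head? = some (σag'' []) →
        σenv' ((playPrefix σag σenv j).map Prod.fst ++ l') = τ l') :
    ∀ m, playPrefix σag' σenv' (j + m)
      = playPrefix σag σenv j ++ playPrefix σag'' τ m := by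
  have hhead : ∀ m, 1 ≤ m → ((playPrefix σag'' τ m).map Prod.fst).head? = some (σag'' []) := by
    intro m hm
    have h1 : (playPrefix σag'' τ m).take 1 = playPrefix σag'' τ 1 :=
      playPrefix_take σag'' τ hm
    have : (playPrefix σag'' τ m).head? = some (σag'' [], τ [σag'' []]) := by
      rw [← head?_take_one, h1]; rfl
    rw [List.head?_map, this]; rfl
  intro m
  induction m with
  | zero =>
    rw [Nat.add_zero, show playPrefix σag'' τ 0 = [] from rfl, List.append_nil]; exact hR
  | succ m ih =>
    have hh : ((playPrefix σag'' τ m).map Prod.fst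
        ++ [σag'' ((playPrefix σag'' τ m).map Prod.snd)]).head? = some (σag'' []) := by
      rcases Nat.eq_zero_or_pos m with rfl | hm
      · simp [show playPrefix σag'' τ 0 = [] from rfl]
      · rw [List.head?_append, hhead m hm]; rfl
    have hplay : play σag' σenv' (j+m) = play σag'' τ m := by
      simp only [play, ih, List.map_append]
      rw [← hag, List.append_assoc, hdev _ hh]
    rw [show j + (m+1) = (j+m)+1 from rfl, playPrefix_succ, ih, playPrefix_succ, hplay,
      List.append_assoc]

theorem map_fst_playPrefix_succ (σag : List B → A) (σenv : List A → B) (n : ℕ) :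
    (playPrefix σag σenv (n+1)).map Prod.fst
      = (playPrefix σag σenv n).map Prod.fst ++ [(play σag σenv n).1] := by
  rw [playPrefix_succ, List.map_append]; rfl

theorem length_map_fst (σag : List B → A) (σenv : List A → B) (n : ℕ) :
    ((playPrefix σag σenv n).map Prod.fst).length = n := by
  simp [length_playPrefix]

theorem take_map_fst (σag : List B → A) (σenv : List A → B) {m n : ℕ} (h : m ≤ n) :
    ((playPrefix σag σenv n).map Prod.fst).take m = (playPrefix σag σenv m).map Prod.fst := by
  rw [← List.map_take, playPrefix_take σag σenv h]

theorem dev_exists (σag : List B → A) (σenv : List A → B) (l : List A) :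
    ∃ j, j = l.length ∨ l.take (j+1) ≠ (playPrefix σag σenv (j+1)).map Prod.fst :=
  ⟨l.length, Or.inl rfl⟩

open Classical in
noncomputable def dev (σag : List B → A) (σenv : List A → B) (l : List A) : ℕ :=
  Nat.find (dev_exists σag σenv l)

open Classical in
theorem dev_spec (σag : List B → A) (σenv : List A → B) (l : List A) :
    dev σag σenv l = l.length ∨
      l.take (dev σag σenv l + 1) ≠ (playPrefix σag σenv (dev σag σenv l + 1)).map Prod.fst :=
  Nat.find_spec (dev_exists σag σenv l)

open Classical in
theorem dev_le (σag : List B → A) (σenv : List A → B) (l : List A) :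
    dev σag σenv l ≤ l.length :=
  Nat.find_le (Or.inl rfl)

open Classical in
theorem dev_min (σag : List B → A) (σenv : List A → B) (l : List A) :
    ∀ j, j < dev σag σenv l →
      j ≠ l.length ∧ l.take (j+1) = (playPrefix σag σenv (j+1)).map Prod.fst := by
  intro j hj
  have h := Nat.find_min (dev_exists σag σenv l) hj
  push_neg at h
  exact h

/-- E1: a history fully consistent with the real play has `dev` equal to its length. -/
theorem dev_consistent (σag : List B → A) (σenv : List A → B) (n : ℕ) :
    dev σag σenv ((playPrefix σag σenv n).map Prod.fst) = n := by
  have hle : dev σag σenv ((playPrefix σag σenv n).map Prod.fst) ≤ n := by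
    have := dev_le σag σenv ((playPrefix σag σenv n).map Prod.fst)
    rwa [length_map_fst] at this
  rcases Nat.lt_or_ge (dev σag σenv ((playPrefix σag σenv n).map Prod.fst)) n with h | h
  · exfalso
    rcases dev_spec σag σenv ((playPrefix σag σenv n).map Prod.fst) with h1 | h1
    · rw [length_map_fst] at h1; omega
    · exact h1 (take_map_fst σag σenv (by omega))
  · omega

/-- E2: a history deviating from the real play exactly at time `j`. -/
theorem dev_deviate (σag : List B → A) (σenv : List A → B) (j : ℕ) (l' : List A) (a : A)
    (hhead : l'.head? = some a) (hne : a ≠ (play σag σenv j).1) :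
    dev σag σenv ((playPrefix σag σenv j).map Prod.fst ++ l') = j := by
  obtain ⟨t, rfl⟩ : ∃ t, l' = a :: t := by
    cases l' with
    | nil => simp at hhead
    | cons b t => simp at hhead; exact ⟨t, by rw [hhead]⟩
  have key : ∀ L : List A, (playPrefix σag σenv j).map Prod.fst ++ a :: t = L →
      dev σag σenv L = j := by
    intro L hL
    have hlen : j + 1 ≤ L.length := by
      rw [← hL]; simp [length_playPrefix]
    have htake : L.take (j+1) = (playPrefix σag σenv j).map Prod.fst ++ [a] := by
      rw [← hL, show j + 1 = ((playPrefix σag σenv j).map Prod.fst).length + 1 from by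
        rw [length_map_fst], List.take_append]
      rw [List.take_of_length_le (Nat.le_succ _), Nat.add_sub_cancel_left]
      rfl
    have hd : dev σag σenv L ≤ j := by
      by_contra h
      push_neg at h
      have := (dev_min σag σenv L j h).2
      rw [htake, map_fst_playPrefix_succ] at this
      exact hne (by simpa using List.append_cancel_left this)
    have hge : j ≤ dev σag σenv L := by
      by_contra h
      push_neg at h
      have hspec := dev_spec σag σenv L
      set d := dev σag σenv L with hdd
      rcases hspec with h1 | h1
      · omega
      · apply h1
        rw [← hL, List.take_append_of_le_length (by rw [length_map_fst]; omega),
          take_map_fst σag σenv (by omega)]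
    exact le_antisymm hd hge
  exact key _ rfl

end SafeRed

/-- Reduction of synthesis under a safety environment specification to a game
on the restricted arena: `σag` enforces `Task` under `Safe T` (where `T` is the
set of nonempty finite words accepted by `M`) iff for every environment
strategy, whenever the run of the play in `M` stays in the environment's
safety winning region and in `M.accept` from time `1` on, the play is in
`Task`. -/
theorem enforces_under_safe_iff_restricted_game {A B Q : Type}
    [Fintype A] [Fintype B] [Nonempty A] [Nonempty B] [Fintype Q]
    (M : DFA (A × B) Q)
    (T : Set (List (A × B))) (hT : T = {w | w ≠ [] ∧ w ∈ M.accepts})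
    (Task : Set (ℕ → A × B)) (σag : List B → A) :
    EnforcesUnder σag Task (Safe T) ↔
      ∀ σenv : List A → B,
        ((∀ k : ℕ, EnvWinsSafeFrom M (M.eval (pre (play σag σenv) k))) ∧
          (∀ k : ℕ, 1 ≤ k → M.eval (pre (play σag σenv) k) ∈ M.accept)) →
        play σag σenv ∈ Task := by
  classical
  constructor
  · -- hard direction
    rintro hE σenv ⟨hwin, hacc⟩
    choose τ hτ using hwin
    set σenv' : List A → B := fun l =>
      if SafeRed.dev σag σenv l = l.length then σenv l
      else τ (SafeRed.dev σag σenv l) (l.drop (SafeRed.dev σag σenv l)) with hσenv'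
    have hcons : ∀ n, σenv' ((playPrefix σag σenv n).map Prod.fst ++ [(play σag σenv n).1])
        = σenv ((playPrefix σag σenv n).map Prod.fst ++ [(play σag σenv n).1]) := by
      intro n
      rw [← SafeRed.map_fst_playPrefix_succ]
      simp only [hσenv']
      rw [if_pos (by rw [SafeRed.dev_consistent, SafeRed.length_map_fst])]
    have hplayeq : play σag σenv' = play σag σenv :=
      SafeRed.play_funext_of_env_agree σag σenv σenv' hcons
    have hsafe : EnvEnforces σenv' (Safe T) := by
      intro σag' m hm
      rw [hT]
      refine ⟨?_, ?_⟩
      · intro h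
        have hl := SafeRed.length_pre (play σag' σenv') m
        rw [h] at hl
        simp at hl
        omega
      · rw [DFA.mem_accepts, SafeRed.pre_play]
        by_cases hR : playPrefix σag' σenv' m = playPrefix σag σenv m
        · rw [hR, ← SafeRed.pre_play]
          exact hacc m hm
        · have hex : ∃ n, playPrefix σag' σenv' (n+1) ≠ playPrefix σag σenv (n+1) :=
            ⟨m - 1, by rwa [Nat.sub_add_cancel hm]⟩
          set j := Nat.find hex with hjdef
          have hj1 : playPrefix σag' σenv' (j+1) ≠ playPrefix σag σenv (j+1) :=
            Nat.find_spec hex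
          have hjmin : ∀ i, i < j → playPrefix σag' σenv' (i+1) = playPrefix σag σenv (i+1) :=
            fun i hi => not_not.mp (Nat.find_min hex hi)
          have hRj : playPrefix σag' σenv' j = playPrefix σag σenv j := by
            rcases Nat.eq_zero_or_pos j with h0 | h0
            · rw [h0]; rfl
            · have := hjmin (j-1) (by omega)
              rwa [Nat.sub_add_cancel h0] at this
          have hjm : j < m := by
            have : j ≤ m - 1 := Nat.find_le (by rwa [Nat.sub_add_cancel hm])
            omega
          have hane : σag' ((playPrefix σag σenv j).map Prod.snd) ≠ (play σag σenv j).1 := by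
            intro he
            apply hj1
            rw [SafeRed.playPrefix_succ, SafeRed.playPrefix_succ, hRj]
            have hp : play σag' σenv' j = play σag σenv j := by
              simp only [play, hRj]
              rw [he]
              exact congrArg (Prod.mk _) (hcons j)
            rw [hp]
          set σag'' : List B → A :=
            fun l => σag' ((playPrefix σag σenv j).map Prod.snd ++ l) with hσag''
          have ha0 : σag'' [] = σag' ((playPrefix σag σenv j).map Prod.snd) := by
            simp only [hσag'', List.append_nil]
          have hdev : ∀ l' : List A, l'.head? = some (σag'' []) →
              σenv' ((playPrefix σag σenv j).map Prod.fst ++ l') = τ j l' := by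
            intro l' hh
            rw [ha0] at hh
            have hdv := SafeRed.dev_deviate σag σenv j l' _ hh hane
            have hne : l' ≠ [] := by intro h; rw [h] at hh; simp at hh
            have hlen : 1 ≤ l'.length := by
              cases l' with
              | nil => exact absurd rfl hne
              | cons x t => simp
            simp only [hσenv']
            rw [if_neg (by
              rw [hdv, List.length_append, SafeRed.length_map_fst]
              omega), hdv,
              show ((playPrefix σag σenv j).map Prod.fst ++ l').drop j
                  = l' from List.drop_left' (SafeRed.length_map_fst σag σenv j)]
          have hdc := SafeRed.deviation_playPrefix σag σag' σag'' σenv σenv' (τ j) j hRj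
            (fun l => rfl) hdev (m - j)
          rw [show m = j + (m - j) from by omega, hdc]
          have key := hτ j σag'' (m - j) (by omega)
          rw [SafeRed.pre_play, SafeRed.pre_play] at key
          simp only [DFA.eval] at key ⊢
          rw [M.evalFrom_of_append]
          exact key
    have := hE σenv' hsafe
    rwa [hplayeq] at this
  · -- easy direction
    intro hR σenv henv
    apply hR σenv
    constructor
    · intro k
      refine ⟨fun l => σenv ((playPrefix σag σenv k).map Prod.fst ++ l), ?_⟩
      intro σag' m hm
      set σag'' : List B → A :=
        fun l => if l.length < k then (play σag σenv l.length).1 else σag' (l.drop k)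
        with hσag''
      have hsh := SafeRed.shift_playPrefix σag σag' σag'' σenv
        (fun l => σenv ((playPrefix σag σenv k).map Prod.fst ++ l)) k
        (fun l hl => by simp only [hσag'']; rw [if_pos hl])
        (fun l hl => by simp only [hσag'']; rw [if_neg (by omega)])
        (fun l => rfl) m
      have h1 := henv σag'' (k + m) (by omega)
      rw [hT] at h1
      obtain ⟨-, h2⟩ := h1
      rw [DFA.mem_accepts, SafeRed.pre_play, hsh] at h2
      rw [SafeRed.pre_play, SafeRed.pre_play]
      simp only [DFA.eval] at h2 ⊢
      rw [M.evalFrom_of_append] at h2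
      exact h2
    · intro k hk
      have h1 := henv σag k hk
      rw [hT] at h1
      exact (DFA.mem_accepts M).mp h1.2
end
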